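/- In the Section 7 setting, the signed graph Γ fails the Kähler extension criterion: there exists a pair of adjacent edges of Γ — namely the two basic edges emanating from any interior vertex — which are not both contained in any 2-valent signed GKM subgraph of Γ of polytope type. -/

import Mathlib

open Classical

namespace GKMPaper

/-- `ℤ^m`, the weight lattice. -/
abbrev Zm (m : ℕ) := Fin m → ℤ

/-- The relation identifying a vector with its negative. -/
def pmRel (m : ℕ) (a b : Zm m) : Prop := a = b ∨ a = -b

theorem pmRel_equiv (m : ℕ) : Equivalence (pmRel m) := by
  constructor
  · intro a; exact Or.inl rfl
  · intro a b hab
    rcases hab with hh | hh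
    · exact Or.inl hh.symm
    · exact Or.inr (by rw [hh, neg_neg])
  · intro a b c h1 h2
    rcases h1 with h1 | h1 <;> rcases h2 with h2 | h2
    · exact Or.inl (h1.trans h2)
    · exact Or.inr (h1.trans h2)
    · exact Or.inr (by rw [h1, h2])
    · exact Or.inl (by rw [h1, h2, neg_neg])

def pmSetoid (m : ℕ) : Setoid (Zm m) := ⟨pmRel m, pmRel_equiv m⟩

/-- `ℤ^m / ±1`. -/
def ZmPM (m : ℕ) := Quotient (pmSetoid m)

/-- The projection `ℤ^m → ℤ^m/±1`. -/
def pm {m : ℕ} (a : Zm m) : ZmPM m := Quotient.mk (pmSetoid m) a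

/-- Linear independence over `ℤ`. -/
def Indep {m : ℕ} (a b : Zm m) : Prop :=
  ∀ c d : ℤ, c • a + d • b = 0 → c = 0 ∧ d = 0

/-- An abstract graph with finite vertex and edge sets, each edge occurring with
both orientations, and no loops. -/
structure OrGraph : Type 1 where
  V : Type
  E : Type
  fV : Fintype V
  fE : Fintype E
  dV : DecidableEq V
  dE : DecidableEq E
  src : E → V
  dst : E → V
  rev : E → E
  rev_rev : ∀ e, rev (rev e) = e
  rev_ne : ∀ e, rev e ≠ e
  src_rev : ∀ e, src (rev e) = dst e
  no_loop : ∀ e, src e ≠ dst e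

attribute [instance] OrGraph.fV OrGraph.fE OrGraph.dV OrGraph.dE

/-- A connection on a graph. -/
structure Connection (G : OrGraph) where
  t : G.E → G.E → G.E
  src_t : ∀ e f, G.src f = G.src e → G.src (t e f) = G.dst e
  t_self : ∀ e, t e e = G.rev e
  t_inv : ∀ e f, G.src f = G.src e → t (G.rev e) (t e f) = f

/-- `k`-valence. -/
def OrGraph.Regular (G : OrGraph) (k : ℕ) : Prop :=
  ∀ v : G.V, Fintype.card {e : G.E // G.src e = v} = k

def OrGraph.Adj (G : OrGraph) (v w : G.V) : Prop :=
  ∃ e, G.src e = v ∧ G.dst e = w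

def OrGraph.IsConn (G : OrGraph) : Prop :=
  ∀ v w : G.V, Relation.ReflTransGen G.Adj v w

/-- Compatibility of a connection with an unsigned axial function. -/
def UnsignedCompat {m : ℕ} (G : OrGraph) (α : G.E → ZmPM m) (C : Connection G) : Prop :=
  (∀ e f : G.E, G.src f = G.src e → e ≠ f →
      ∀ a b : Zm m, pm a = α e → pm b = α f → Indep a b) ∧
  (∀ e f : G.E, G.src f = G.src e →
      ∃ (a g : Zm m) (c : ℤ), pm a = α f ∧ pm g = α e ∧ α (C.t e f) = pm (a + c • g)) ∧
  (∀ e : G.E, α (G.rev e) = α e)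

/-- `(G, α)` is an (unsigned) abstract GKM graph of valence `k` with labels in `ℤ^m/±1`. -/
def IsGKM {m : ℕ} (G : OrGraph) (k : ℕ) (α : G.E → ZmPM m) : Prop :=
  G.Regular k ∧ G.IsConn ∧ ∃ C : Connection G, UnsignedCompat G α C

/-- Compatibility of a connection with a signed axial function. -/
def SignedCompat {m : ℕ} (G : OrGraph) (α : G.E → Zm m) (C : Connection G) : Prop :=
  (∀ e f : G.E, G.src f = G.src e → e ≠ f → Indep (α e) (α f)) ∧
  (∀ e f : G.E, G.src f = G.src e → ∃ c : ℤ, α (C.t e f) = α f + c • α e) ∧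
  (∀ e : G.E, α (G.rev e) = - α e)

/-- `(G, α)` is a signed abstract GKM graph of valence `k` with labels in `ℤ^m`. -/
def IsSignedGKM {m : ℕ} (G : OrGraph) (k : ℕ) (α : G.E → Zm m) : Prop :=
  G.Regular k ∧ G.IsConn ∧ ∃ C : Connection G, SignedCompat G α C

/-- Effectivity of an unsigned GKM graph: at every vertex, the labels of the
outgoing edges lift to a generating set of `ℤ^m`. -/
def Effective {m : ℕ} (G : OrGraph) (α : G.E → ZmPM m) : Prop :=
  ∀ v : G.V, ∃ lift : {e : G.E // G.src e = v} → Zm m,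
    (∀ e, pm (lift e) = α e.1) ∧ Submodule.span ℤ (Set.range lift) = ⊤

def SignedEffective {m : ℕ} (G : OrGraph) (α : G.E → Zm m) : Prop :=
  ∀ v : G.V,
    Submodule.span ℤ (Set.range (fun e : {e : G.E // G.src e = v} => α e.1)) = ⊤

/-- A graph fibration: a morphism sending vertices to vertices and horizontal
edges to edges, bijectively from the horizontal edges at `p` to the edges at `π(p)`. -/
structure GraphFib (G B : OrGraph) where
  onV : G.V → B.V
  onE : G.E → B.E
  src_onE : ∀ e, onV (G.src e) ≠ onV (G.dst e) → B.src (onE e) = onV (G.src e)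
  dst_onE : ∀ e, onV (G.src e) ≠ onV (G.dst e) → B.dst (onE e) = onV (G.dst e)
  rev_onE : ∀ e, onV (G.src e) ≠ onV (G.dst e) → onE (G.rev e) = B.rev (onE e)

def GraphFib.Vertical {G B : OrGraph} (π : GraphFib G B) (e : G.E) : Prop :=
  π.onV (G.src e) = π.onV (G.dst e)

def GraphFib.IsFib {G B : OrGraph} (π : GraphFib G B) : Prop :=
  ∀ p : G.V, Function.Bijective
    (fun e : {e : G.E // G.src e = p ∧ ¬ π.Vertical e} =>
      (⟨π.onE e.1, by rw [π.src_onE e.1 e.2.2, e.2.1]⟩ : {f : B.E // B.src f = π.onV p}))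

/-- The extra conditions for a (unsigned) GKM fibration, w.r.t. connections `C`, `CB`. -/
def GKMFibCompat {m : ℕ} {G B : OrGraph} (αΓ : G.E → ZmPM m) (αB : B.E → ZmPM m)
    (π : GraphFib G B) (C : Connection G) (CB : Connection B) : Prop :=
  (∀ e, ¬ π.Vertical e → αΓ e = αB (π.onE e)) ∧
  (∀ e f, G.src f = G.src e → π.Vertical f → π.Vertical (C.t e f)) ∧
  (∀ e f, G.src f = G.src e → ¬ π.Vertical e → ¬ π.Vertical f →
      ¬ π.Vertical (C.t e f) ∧ π.onE (C.t e f) = CB.t (π.onE e) (π.onE f))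

/-- `π` is a GKM fibration of unsigned GKM graphs. -/
def IsGKMFib {m : ℕ} {G B : OrGraph} (αΓ : G.E → ZmPM m) (αB : B.E → ZmPM m)
    (π : GraphFib G B) : Prop :=
  π.IsFib ∧ ∃ (C : Connection G) (CB : Connection B),
    UnsignedCompat G αΓ C ∧ UnsignedCompat B αB CB ∧ GKMFibCompat αΓ αB π C CB

def SignedGKMFibCompat {m : ℕ} {G B : OrGraph} (sΓ : G.E → Zm m) (sB : B.E → Zm m)
    (π : GraphFib G B) (C : Connection G) (CB : Connection B) : Prop :=
  (∀ e, ¬ π.Vertical e → sΓ e = sB (π.onE e)) ∧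
  (∀ e f, G.src f = G.src e → π.Vertical f → π.Vertical (C.t e f)) ∧
  (∀ e f, G.src f = G.src e → ¬ π.Vertical e → ¬ π.Vertical f →
      ¬ π.Vertical (C.t e f) ∧ π.onE (C.t e f) = CB.t (π.onE e) (π.onE f))

/-- `π` is a signed GKM fibration of signed GKM graphs. -/
def IsSignedGKMFib {m : ℕ} {G B : OrGraph} (sΓ : G.E → Zm m) (sB : B.E → Zm m)
    (π : GraphFib G B) : Prop :=
  π.IsFib ∧ ∃ (C : Connection G) (CB : Connection B),
    SignedCompat G sΓ C ∧ SignedCompat B sB CB ∧ SignedGKMFibCompat sΓ sB π C CB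

/-- `(π, ft)` is a fiberwise signed fibration: `ft` is a lift of `αΓ` on the
vertical edges, satisfying the congruence condition w.r.t. suitable connections. -/
def IsFiberwiseSigned {m : ℕ} {G B : OrGraph} (αΓ : G.E → ZmPM m) (αB : B.E → ZmPM m)
    (π : GraphFib G B) (ft : G.E → Zm m) : Prop :=
  π.IsFib ∧
  (∀ e, π.Vertical e → pm (ft e) = αΓ e) ∧
  (∀ e, π.Vertical e → ft (G.rev e) = - ft e) ∧
  ∃ (C : Connection G) (CB : Connection B),
    UnsignedCompat G αΓ C ∧ UnsignedCompat B αB CB ∧ GKMFibCompat αΓ αB π C CB ∧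
    ∀ e f, G.src f = G.src e → π.Vertical f →
      ∃ (g : Zm m) (c : ℤ), pm g = αΓ e ∧ ft (C.t e f) = ft f + c • g

/-- Isomorphism of unsigned GKM graphs. -/
structure GKMIso {m : ℕ} (G : OrGraph) (α : G.E → ZmPM m)
    (G' : OrGraph) (α' : G'.E → ZmPM m) : Type where
  fV : G.V ≃ G'.V
  fE : G.E ≃ G'.E
  φ : Zm m ≃ₗ[ℤ] Zm m
  src_comm : ∀ e, G'.src (fE e) = fV (G.src e)
  dst_comm : ∀ e, G'.dst (fE e) = fV (G.dst e)
  rev_comm : ∀ e, fE (G.rev e) = G'.rev (fE e)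
  lab : ∀ (e : G.E) (a : Zm m), pm a = α e → α' (fE e) = pm (φ a)

/-- Isomorphism of signed GKM graphs. -/
structure SignedGKMIso {m : ℕ} (G : OrGraph) (α : G.E → Zm m)
    (G' : OrGraph) (α' : G'.E → Zm m) : Type where
  fV : G.V ≃ G'.V
  fE : G.E ≃ G'.E
  φ : Zm m ≃ₗ[ℤ] Zm m
  src_comm : ∀ e, G'.src (fE e) = fV (G.src e)
  dst_comm : ∀ e, G'.dst (fE e) = fV (G.dst e)
  rev_comm : ∀ e, fE (G.rev e) = G'.rev (fE e)
  lab : ∀ e, α' (fE e) = φ (α e)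

/-- Equivalence of fiberwise signed fibrations over the same base (identity on `ℤ^m`). -/
structure FSFEquiv {m : ℕ} {G B G' : OrGraph}
    (αΓ : G.E → ZmPM m) (π : GraphFib G B) (ft : G.E → Zm m)
    (αΓ' : G'.E → ZmPM m) (π' : GraphFib G' B) (ft' : G'.E → Zm m) : Type where
  fV : G.V ≃ G'.V
  fE : G.E ≃ G'.E
  src_comm : ∀ e, G'.src (fE e) = fV (G.src e)
  dst_comm : ∀ e, G'.dst (fE e) = fV (G.dst e)
  rev_comm : ∀ e, fE (G.rev e) = G'.rev (fE e)
  lab : ∀ e, αΓ' (fE e) = αΓ e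
  baseV : ∀ p, π'.onV (fV p) = π.onV p
  baseE : ∀ e, ¬ π.Vertical e → π'.onE (fE e) = π.onE e
  fiblab : ∀ e, π.Vertical e → ft' (fE e) = ft e

/-- Equivalence of signed GKM fibrations over the same base (identity on `ℤ^m`). -/
structure SFEquiv {m : ℕ} {G B G' : OrGraph}
    (sΓ : G.E → Zm m) (π : GraphFib G B)
    (sΓ' : G'.E → Zm m) (π' : GraphFib G' B) : Type where
  fV : G.V ≃ G'.V
  fE : G.E ≃ G'.E
  src_comm : ∀ e, G'.src (fE e) = fV (G.src e)
  dst_comm : ∀ e, G'.dst (fE e) = fV (G.dst e)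
  rev_comm : ∀ e, fE (G.rev e) = G'.rev (fE e)
  lab : ∀ e, sΓ' (fE e) = sΓ e
  baseV : ∀ p, π'.onV (fV p) = π.onV p
  baseE : ∀ e, ¬ π.Vertical e → π'.onE (fE e) = π.onE e

/-- Realizing `ℤ²` inside `ℝ² = ℂ`. -/
noncomputable def toC (a : Zm 2) : ℂ := (a 0 : ℝ) + (a 1 : ℝ) * Complex.I

def cross (a b : ℂ) : ℝ := a.re * b.im - a.im * b.re

/-- A vertex of a signed GKM graph with labels in `ℤ²` is interior if the cone
spanned by the labels of the edges emanating from it is all of `ℝ²`. -/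
def InteriorVtx (G : OrGraph) (α : G.E → Zm 2) (p : G.V) : Prop :=
  ∀ x : ℂ, ∃ c : G.E → ℝ, (∀ e, 0 ≤ c e) ∧
    x = ∑ e ∈ Finset.univ.filter (fun e : G.E => G.src e = p), c e • toC (α e)

/-- The angle from `w` to `w'`, represented in `[0, 2π)` if `ε = true`,
and in `(-2π, 0]` if `ε = false`. -/
noncomputable def angTo (ε : Bool) (w w' : ℂ) : ℝ :=
  if ε then (if (w' / w).arg < 0 then (w' / w).arg + 2 * Real.pi else (w' / w).arg)
  else (if 0 < (w' / w).arg then (w' / w).arg - 2 * Real.pi else (w' / w).arg)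

/-- The winding number of a cyclic sequence of vectors w.r.t. the orientation `ε`. -/
noncomputable def winding {nn : ℕ} [NeZero nn] (w : ZMod nn → ℂ) (ε : Bool) : ℝ :=
  (1 / (2 * Real.pi)) * ∑ i : ZMod nn, |angTo ε (w i) (w (i + 1))|

def LocallyConvex {nn : ℕ} (w : ZMod nn → ℂ) : Prop :=
  (∀ i, angTo true (w i) (w (i + 1)) ∈ Set.Ioo 0 Real.pi) ∨
  (∀ i, angTo false (w i) (w (i + 1)) ∈ Set.Ioo (-Real.pi) 0)

/-- `ε` is the preferred orientation of the locally convex sequence `w`. -/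
def Preferred {nn : ℕ} (w : ZMod nn → ℂ) (ε : Bool) : Prop :=
  (ε = true ∧ ∀ i, angTo true (w i) (w (i + 1)) ∈ Set.Ioo 0 Real.pi) ∨
  (ε = false ∧ ∀ i, angTo false (w i) (w (i + 1)) ∈ Set.Ioo (-Real.pi) 0)

/-- `P` lists the vertices of a strictly convex polygon in cyclic order. -/
def ConvexCyclic {nn : ℕ} (P : ZMod nn → ℂ) : Prop :=
  (∀ i j, j ≠ i → j ≠ i + 1 → 0 < cross (P (i + 1) - P i) (P j - P i)) ∨
  (∀ i j, j ≠ i → j ≠ i + 1 → cross (P (i + 1) - P i) (P j - P i) < 0)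

def SubAdj (G : OrGraph) (S : Set G.E) (v w : G.V) : Prop :=
  ∃ e ∈ S, G.src e = v ∧ G.dst e = w

/-- `S` is (the edge set of) a connected `2`-valent signed GKM subgraph of `(G, α)`. -/
def IsSigned2ValentSub (G : OrGraph) (α : G.E → Zm 2) (S : Set G.E) : Prop :=
  S.Nonempty ∧
  (∀ e ∈ S, G.rev e ∈ S) ∧
  (∀ v : G.V, (∃ e ∈ S, G.src e = v) → Nat.card {e : G.E // e ∈ S ∧ G.src e = v} = 2) ∧
  (∀ v w : G.V, (∃ e ∈ S, G.src e = v) → (∃ e ∈ S, G.src e = w) →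
      Relation.ReflTransGen (SubAdj G S) v w) ∧
  ∃ T : G.E → G.E → G.E,
    (∀ e f, e ∈ S → f ∈ S → G.src f = G.src e → T e f ∈ S ∧ G.src (T e f) = G.dst e) ∧
    (∀ e, e ∈ S → T e e = G.rev e) ∧
    (∀ e f, e ∈ S → f ∈ S → G.src f = G.src e → T (G.rev e) (T e f) = f) ∧
    (∀ e f, e ∈ S → f ∈ S → G.src f = G.src e → ∃ c : ℤ, α (T e f) = α f + c • α e)

/-- A `2`-valent signed GKM subgraph of polytope type: it is a cycle realized by the
boundary edges of a simple convex `2`-polytope, with labels representing the slopes. -/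
def IsPolytopeTypeSub (G : OrGraph) (α : G.E → Zm 2) (S : Set G.E) : Prop :=
  IsSigned2ValentSub G α S ∧
  ∃ np : ℕ, 3 ≤ np ∧
    ∃ (cyc : ZMod np → G.E) (P : ZMod np → ℂ) (t : ZMod np → ℝ),
      (∀ i, cyc i ∈ S) ∧
      (∀ ed ∈ S, ∃ i, ed = cyc i ∨ ed = G.rev (cyc i)) ∧
      (∀ i, G.dst (cyc i) = G.src (cyc (i + 1))) ∧
      ConvexCyclic P ∧
      (∀ i, 0 < t i) ∧
      (∀ i, P (i + 1) - P i = t i • toC (α (cyc i)))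

/-- A fibration over an `n`-gon base is of product type if the lifts of a path
once around the base are closed. -/
def ProductType {G B : OrGraph} (π : GraphFib G B) {nn : ℕ} (eB : ZMod nn → B.E) : Prop :=
  ∃ l : ZMod nn → G.E,
    ∀ i, ¬ π.Vertical (l i) ∧ π.onE (l i) = eB i ∧ G.dst (l i) = G.src (l (i + 1))

/-- `ℤ`-indexed `n`-gon data for a `2`-valent base graph. -/
structure ZGonData (B : OrGraph) (n : ℕ) where
  v : ℤ → B.V
  eB : ℤ → B.E
  v_per : ∀ i, v (i + n) = v i
  e_per : ∀ i, eB (i + n) = eB i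
  src_e : ∀ i, B.src (eB i) = v i
  dst_e : ∀ i, B.dst (eB i) = v (i + 1)
  v_inj : ∀ i j : ℤ, 0 ≤ i → i < n → 0 ≤ j → j < n → v i = v j → i = j
  v_surj : ∀ w : B.V, ∃ i : ℤ, v i = w
  e_cover : ∀ ed : B.E, ∃ i : ℤ, ed = eB i ∨ ed = B.rev (eB i)

/-- A choice of sign representatives `γ_i` of the base labels with
`γ_i ≡ -γ_{i+2} (mod γ_{i+1})` for all `i ∈ ℤ`. -/
structure GammaData {B : OrGraph} {n : ℕ} (αB : B.E → ZmPM 2) (D : ZGonData B n) where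
  γ : ℤ → Zm 2
  lift : ∀ i, pm (γ i) = αB (D.eB i)
  cong : ∀ i, ∃ c : ℤ, γ i + γ (i + 2) = c • γ (i + 1)

/-- A fiberwise signed `3`-valent GKM fibration over `(B, αB)`. -/
structure FSFOver (B : OrGraph) (αB : B.E → ZmPM 2) : Type 1 where
  G : OrGraph
  αΓ : G.E → ZmPM 2
  hΓ : IsGKM G 3 αΓ
  π : GraphFib G B
  ft : G.E → Zm 2
  isfs : IsFiberwiseSigned αΓ αB π ft

def FSFOver.Equiv {B : OrGraph} {αB : B.E → ZmPM 2} (F F' : FSFOver B αB) : Prop :=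
  Nonempty (FSFEquiv F.αΓ F.π F.ft F'.αΓ F'.π F'.ft)

/-- A signed `3`-valent GKM fibration over the signed graph `(B, sB)`. -/
structure SFOver (B : OrGraph) (sB : B.E → Zm 2) : Type 1 where
  G : OrGraph
  sΓ : G.E → Zm 2
  hΓ : IsSignedGKM G 3 sΓ
  π : GraphFib G B
  issf : IsSignedGKMFib sΓ sB π

def SFOver.Equiv {B : OrGraph} {sB : B.E → Zm 2} (F F' : SFOver B sB) : Prop :=
  Nonempty (SFEquiv F.sΓ F.π F'.sΓ F'.π)

/-- The fibration `F` realizes the classification datum `([k], η)` w.r.t. the fixed data. -/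
def RealizesFS {B : OrGraph} {αB : B.E → ZmPM 2} {n : ℕ} (D : ZGonData B n)
    (Γd : GammaData αB D) (F : FSFOver B αB) (k : ZMod n → ℤ) (η : Bool) : Prop :=
  (η = false ↔ ProductType F.π (fun i : ZMod n => D.eB i.val)) ∧
  ∃ (gE : ℤ → F.G.E) (αf : ℤ → Zm 2) (kk : ℤ → ℤ),
    (∀ i, F.π.Vertical (gE i)) ∧
    (∀ i, F.π.onV (F.G.src (gE i)) = D.v i) ∧
    (∀ i, gE (i + n) = gE i ∨ gE (i + n) = F.G.rev (gE i)) ∧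
    (∀ i, pm (αf i) = F.αΓ (gE i)) ∧
    (∀ i, ∃ c : ℤ, αf (i + 1) = αf i + c • Γd.γ i) ∧
    (∀ i, αf i = kk i • Γd.γ (i - 1) - kk (i - 1) • Γd.γ i) ∧
    (∀ i, kk i ≠ 0) ∧
    (∀ i : ZMod n, k i = kk i.val)

/-- The signed fibration `F` realizes the classification datum `([k], η)`. -/
def RealizesS {B : OrGraph} (sB : B.E → Zm 2) {αB : B.E → ZmPM 2} {n : ℕ}
    (D : ZGonData B n) (Γd : GammaData αB D) (F : SFOver B sB)
    (k : ZMod n → ℤ) (η : Bool) : Prop :=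
  (η = false ↔ ProductType F.π (fun i : ZMod n => D.eB i.val)) ∧
  ∃ (gE : ℤ → F.G.E) (αf : ℤ → Zm 2) (kk : ℤ → ℤ),
    (∀ i, F.π.Vertical (gE i)) ∧
    (∀ i, F.π.onV (F.G.src (gE i)) = D.v i) ∧
    (∀ i, gE (i + n) = gE i ∨ gE (i + n) = F.G.rev (gE i)) ∧
    (∀ i, pm (αf i) = pm (F.sΓ (gE i))) ∧
    (∀ i, ∃ c : ℤ, αf (i + 1) = αf i + c • Γd.γ i) ∧
    (∀ i, αf i = kk i • Γd.γ (i - 1) - kk (i - 1) • Γd.γ i) ∧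
    (∀ i, kk i ≠ 0) ∧
    (∀ i : ZMod n, k i = kk i.val)

def KRel (n : ℕ) (a b : {k : ZMod n → ℤ // ∀ i, k i ≠ 0}) : Prop :=
  a.1 = b.1 ∨ a.1 = - b.1

/-- `((ℤ∖{0})^n)/±1`. -/
def KClass (n : ℕ) := Quot (KRel n)

/-- The Section 7 setting: a signed GKM fibration of twisted type of a `3`-valent
signed GKM graph `Γ` over `B`, the boundary of a 2-dimensional Delzant polytope with
`n` vertices, with `Γ` having `n-1` interior vertices; with the basic edges `f i`, `h i`
over `e i` and the fiber edges `g i`. -/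
structure Section7 : Type 1 where
  n : ℕ
  hn : 3 ≤ n
  G : OrGraph
  B : OrGraph
  aG : G.E → Zm 2
  aB : B.E → Zm 2
  hG : IsSignedGKM G 3 aG
  hB : IsSignedGKM B 2 aB
  π : GraphFib G B
  hfib : IsSignedGKMFib aG aB π
  v : ZMod n → B.V
  e : ZMod n → B.E
  v_bij : Function.Bijective v
  src_e : ∀ i, B.src (e i) = v i
  dst_e : ∀ i, B.dst (e i) = v (i + 1)
  e_cover : ∀ ed : B.E, ∃ i, ed = e i ∨ ed = B.rev (e i)
  P : ZMod n → ℂ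
  tl : ZMod n → ℝ
  tl_pos : ∀ i, 0 < tl i
  polygon : ConvexCyclic P
  slope : ∀ i, P (i + 1) - P i = tl i • toC (aB (e i))
  delzant : ∀ i, (aB (e (i - 1)) 0) * (aB (e i) 1) - (aB (e (i - 1)) 1) * (aB (e i) 0) = 1 ∨
                 (aB (e (i - 1)) 0) * (aB (e i) 1) - (aB (e (i - 1)) 1) * (aB (e i) 0) = -1
  f : ZMod n → G.E
  h : ZMod n → G.E
  g : ZMod n → G.E
  f_horiz : ∀ i, ¬ π.Vertical (f i)
  h_horiz : ∀ i, ¬ π.Vertical (h i)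
  f_over : ∀ i, π.onE (f i) = e i
  h_over : ∀ i, π.onE (h i) = e i
  f_ne_h : ∀ i, f i ≠ h i
  g_vert : ∀ i, π.Vertical (g i)
  g_src : ∀ i, G.src (g i) = G.src (f i)
  g_dst : ∀ i, G.dst (g i) = G.src (h i)
  chain_f : ∀ i : ZMod n, i + 1 ≠ 0 → G.dst (f i) = G.src (f (i + 1))
  chain_h : ∀ i : ZMod n, i + 1 ≠ 0 → G.dst (h i) = G.src (h (i + 1))
  twist_f : G.dst (f (-1)) = G.src (h 0)
  twist_h : G.dst (h (-1)) = G.src (f 0)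
  k : ZMod n → ℤ
  k_ne : ∀ i, k i ≠ 0
  fiberweight : ∀ i, aG (g i) =
    k i • aB (e (i - 1)) - (if i = 0 then - k (i - 1) else k (i - 1)) • aB (e i)
  interior_count : Nat.card {p : G.V // InteriorVtx G aG p} = n - 1

/-- The type II signed structure: the signs of the labels of every second pair
of basic edges are reversed. -/
noncomputable def Section7.alphaII (S : Section7) : S.G.E → Zm 2 :=
  fun ed =>
    if ∃ i : ZMod S.n, Odd i.val ∧
        (ed = S.f i ∨ ed = S.h i ∨ ed = S.G.rev (S.f i) ∨ ed = S.G.rev (S.h i))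
    then - S.aG ed else S.aG ed


/-! ### Auxiliary lemmas for Statement 8 -/

section CrossLemmas

lemma cross_add_right (a b c : ℂ) : cross a (b + c) = cross a b + cross a c := by
  simp [cross]; ring

lemma cross_smul_right (r : ℝ) (a b : ℂ) : cross a (r • b) = r * cross a b := by
  simp [cross, Complex.real_smul]; ring

lemma cross_smul_left (r : ℝ) (a b : ℂ) : cross (r • a) b = r * cross a b := by
  simp [cross, Complex.real_smul]; ring

lemma cross_neg_right (a b : ℂ) : cross a (-b) = - cross a b := by
  simp [cross]; ring

lemma cross_neg_left (a b : ℂ) : cross (-a) b = - cross a b := by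
  simp [cross]; ring

lemma cross_add_left (a b c : ℂ) : cross (a + b) c = cross a c + cross b c := by
  simp [cross]; ring

lemma cross_sub_left (a b c : ℂ) : cross (a - b) c = cross a c - cross b c := by
  simp [cross]; ring

lemma cross_sub_right (a b c : ℂ) : cross a (b - c) = cross a b - cross a c := by
  simp [cross]; ring

lemma cross_self (a : ℂ) : cross a a = 0 := by simp [cross]; ring

lemma cross_skew (a b : ℂ) : cross a b = - cross b a := by simp [cross]; ring

lemma toC_re (a : Zm 2) : (toC a).re = (a 0 : ℝ) := by simp [toC]

lemma toC_im (a : Zm 2) : (toC a).im = (a 1 : ℝ) := by simp [toC]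

lemma cross_toC (a b : Zm 2) :
    cross (toC a) (toC b) = ((a 0 * b 1 - a 1 * b 0 : ℤ) : ℝ) := by
  simp [cross, toC_re, toC_im]

lemma toC_neg (a : Zm 2) : toC (-a) = - toC a := by
  apply Complex.ext <;> simp [toC_re, toC_im]

lemma toC_sub (a b : Zm 2) : toC (a - b) = toC a - toC b := by
  apply Complex.ext <;> simp [toC_re, toC_im]

lemma toC_zsmul (z : ℤ) (a : Zm 2) : toC (z • a) = (z : ℝ) • toC a := by
  apply Complex.ext <;> simp [toC_re, toC_im, Complex.real_smul]

lemma plane_decomp' (u v x : ℂ) :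
    (cross u v) • x = (cross x v) • u + (cross u x) • v := by
  apply Complex.ext <;>
    simp only [Complex.add_re, Complex.add_im, Complex.real_smul, Complex.mul_re,
      Complex.mul_im, Complex.ofReal_re, Complex.ofReal_im, cross] <;> ring

lemma plane_decomp (u v : ℂ) (hD : cross u v ≠ 0) (x : ℂ) :
    x = (cross x v / cross u v) • u + (cross u x / cross u v) • v := by
  have h := congrArg (fun z => (cross u v)⁻¹ • z) (plane_decomp' u v x)
  simp only [smul_smul, inv_mul_cancel₀ hD, one_smul, smul_add] at h
  rw [div_eq_inv_mul, div_eq_inv_mul]; exact h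

/-- The key plane geometry fact: with `u, v` independent, the cone of `u, v, w`
is all of `ℝ²` iff `w` lies in the interior of the opposite cone of `u, v`. -/
lemma cone_iff (u v w : ℂ) (hD : cross u v ≠ 0) :
    (∀ x : ℂ, ∃ c1 c2 c3 : ℝ, 0 ≤ c1 ∧ 0 ≤ c2 ∧ 0 ≤ c3 ∧ x = c1 • u + c2 • v + c3 • w) ↔
    (cross w v / cross u v < 0 ∧ cross u w / cross u v < 0) := by
  set D := cross u v with hDdef
  constructor
  · intro hcone
    constructor
    · by_contra hs
      push_neg at hs
      obtain ⟨c1, c2, c3, h1, h2, h3, hx⟩ := hcone (-u)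
      have e1 : cross (c1 • u + c2 • v + c3 • w) v =
          c1 * cross u v + c2 * cross v v + c3 * cross w v := by
        have h' : cross (c1 • u + c2 • v + c3 • w) v
            = -(cross v (c1 • u + c2 • v + c3 • w)) := cross_skew _ _
        rw [h', cross_add_right, cross_add_right, cross_smul_right, cross_smul_right,
          cross_smul_right, cross_skew v u, cross_skew v w]
        simp [cross_self]
        ring
      have hxv : cross (-u) v = cross (c1 • u + c2 • v + c3 • w) v := by rw [← hx]
      rw [cross_neg_left, e1, cross_self] at hxv
      have hswv : cross w v = (cross w v / D) * D := by field_simp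
      rw [hswv] at hxv
      have : -1 = c1 + c3 * (cross w v / D) := by
        have h'' := hxv
        field_simp at h'' ⊢
        nlinarith [h'']
      nlinarith [mul_nonneg h3 hs]
    · by_contra hs
      push_neg at hs
      obtain ⟨c1, c2, c3, h1, h2, h3, hx⟩ := hcone (-v)
      have e1 : cross u (c1 • u + c2 • v + c3 • w) =
          c2 * D + c3 * cross u w := by
        rw [cross_add_right, cross_add_right, cross_smul_right, cross_smul_right,
          cross_smul_right, cross_self]
        ring
      have hxv : cross u (-v) = cross u (c1 • u + c2 • v + c3 • w) := by rw [← hx]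
      rw [cross_neg_right, e1] at hxv
      have : -1 = c2 + c3 * (cross u w / D) := by
        have hswv : cross u w = (cross u w / D) * D := by field_simp
        rw [hswv] at hxv
        field_simp at hxv ⊢
        nlinarith [hxv]
      nlinarith [mul_nonneg h3 hs]
  · rintro ⟨hs, ht⟩ x
    set s := cross w v / D with hsdef
    set t := cross u w / D with htdef
    have hw : w = s • u + t • v := plane_decomp u v hD w
    set α := cross x v / D with hα
    set β := cross u x / D with hβ
    have hxd : x = α • u + β • v := plane_decomp u v hD x
    set lam := max 0 (max (α / s) (β / t)) with hlam
    refine ⟨α - lam * s, β - lam * t, lam, ?_, ?_, le_max_left _ _, ?_⟩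
    · have h1 : α / s ≤ lam := le_trans (le_max_left _ _) (le_max_right _ _)
      have h2 := mul_le_mul_of_nonpos_right h1 (le_of_lt hs)
      rw [div_mul_cancel₀ _ (ne_of_lt hs)] at h2
      linarith
    · have h1 : β / t ≤ lam := le_trans (le_max_right _ _) (le_max_right _ _)
      have h2 := mul_le_mul_of_nonpos_right h1 (le_of_lt ht)
      rw [div_mul_cancel₀ _ (ne_of_lt ht)] at h2
      linarith
    · rw [hw, hxd]
      module

lemma four_distinct_card {α : Type} [Fintype α] [DecidableEq α] (a b c d : α)
    (hab : a ≠ b) (hac : a ≠ c) (had : a ≠ d) (hbc : b ≠ c) (hbd : b ≠ d) (hcd : c ≠ d) :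
    4 ≤ Fintype.card α := by
  have h4 : ({a, b, c, d} : Finset α).card = 4 := by
    rw [Finset.card_insert_of_notMem (by simp [hab, hac, had]),
      Finset.card_insert_of_notMem (by simp [hbc, hbd]),
      Finset.card_insert_of_notMem (by simp [hcd]), Finset.card_singleton]
  calc 4 = ({a, b, c, d} : Finset α).card := h4.symm
    _ ≤ Fintype.card α := by rw [← Finset.card_univ]; exact Finset.card_le_univ _

lemma three_distinct_card {α : Type} [Fintype α] [DecidableEq α] (a b c : α)
    (hab : a ≠ b) (hac : a ≠ c) (hbc : b ≠ c) :
    3 ≤ Fintype.card α := by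
  have h3 : ({a, b, c} : Finset α).card = 3 := by
    rw [Finset.card_insert_of_notMem (by simp [hab, hac]),
      Finset.card_insert_of_notMem (by simp [hbc]), Finset.card_singleton]
  calc 3 = ({a, b, c} : Finset α).card := h3.symm
    _ ≤ Fintype.card α := by rw [← Finset.card_univ]; exact Finset.card_le_univ _

lemma OrGraph.dst_rev (G : OrGraph) (e : G.E) : G.dst (G.rev e) = G.src e := by
  have h := G.src_rev (G.rev e)
  rw [G.rev_rev] at h
  exact h.symm

lemma not_dvd_between {n m : ℕ} (h1 : n < m) (h2 : m < 2 * n) : ¬ n ∣ m := by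
  rintro ⟨q, rfl⟩
  rcases q with _ | _ | q
  · omega
  · omega
  · have : n * (q + 1 + 1) = n * q + n * 2 := by ring
    omega

end CrossLemmas


section S7

variable (S : Section7)

instance s7NeZeroN : NeZero S.n := ⟨by have := S.hn; omega⟩
instance s7NeZero2N : NeZero (2 * S.n) := ⟨by have := S.hn; omega⟩

/-- Reduction `ZMod (2n) → ZMod n`. -/
def cc (j : ZMod (2 * S.n)) : ZMod S.n := (j.val : ZMod S.n)

/-- `j` indexes the `f`-side (lower) copy. -/
def lo (j : ZMod (2 * S.n)) : Prop := j.val < S.n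

instance loDec (j : ZMod (2 * S.n)) : Decidable (lo S j) :=
  inferInstanceAs (Decidable (j.val < S.n))

/-- The `2n` vertices of `Γ`. -/
def vtx (j : ZMod (2 * S.n)) : S.G.V :=
  if lo S j then S.G.src (S.f (cc S j)) else S.G.src (S.h (cc S j))

/-- The `2n` basic edges of `Γ`. -/
def bed (j : ZMod (2 * S.n)) : S.G.E :=
  if lo S j then S.f (cc S j) else S.h (cc S j)

/-- The `2n` (oriented) fiber edges of `Γ`. -/
def ged (j : ZMod (2 * S.n)) : S.G.E :=
  if lo S j then S.g (cc S j) else S.G.rev (S.g (cc S j))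

/-- The lifted (antiperiodic) fiber constants. -/
def kap (j : ZMod (2 * S.n)) : ℤ :=
  if lo S j then S.k (cc S j) else - S.k (cc S j)

/-- The lifted base labels. -/
def ga2 (j : ZMod (2 * S.n)) : Zm 2 := S.aB (S.e (cc S j))

lemma hn3 : 3 ≤ S.n := S.hn

lemma cast_mod_2n (x : ℕ) : (((x % (2 * S.n)) : ℕ) : ZMod S.n) = (x : ZMod S.n) := by
  conv_rhs => rw [← Nat.div_add_mod x (2 * S.n)]
  push_cast
  simp [ZMod.natCast_self]

lemma val_one' : (1 : ZMod (2 * S.n)).val = 1 := by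
  have h : ((1 : ℕ) : ZMod (2 * S.n)) = 1 := Nat.cast_one
  rw [← h, ZMod.val_natCast_of_lt (by have := S.hn; omega)]

lemma val_nn : ((S.n : ℕ) : ZMod (2 * S.n)).val = S.n :=
  ZMod.val_natCast_of_lt (by have := S.hn; omega)

lemma val_add_one (j : ZMod (2 * S.n)) : (j + 1).val = (j.val + 1) % (2 * S.n) := by
  rw [ZMod.val_add, val_one']

lemma val_add_nn (j : ZMod (2 * S.n)) :
    (j + (S.n : ZMod (2 * S.n))).val = (j.val + S.n) % (2 * S.n) := by
  rw [ZMod.val_add, val_nn]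

lemma val_sub_one (j : ZMod (2 * S.n)) :
    (j - 1).val = (j.val + (2 * S.n - 1)) % (2 * S.n) := by
  have h : j - 1 = j + ((2 * S.n - 1 : ℕ) : ZMod (2 * S.n)) := by
    have h2 : ((2 * S.n - 1 : ℕ) : ZMod (2 * S.n)) = ((2 * S.n : ℕ) : ZMod (2 * S.n)) - 1 := by
      have : (2 * S.n - 1) + 1 = 2 * S.n := by have := S.hn; omega
      rw [← this]
      push_cast
      ring
    rw [h2, ZMod.natCast_self]
    ring
  rw [h, ZMod.val_add, ZMod.val_natCast_of_lt (by have := S.hn; omega)]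

lemma cc_def (j : ZMod (2 * S.n)) : cc S j = ((j.val : ℕ) : ZMod S.n) := rfl

lemma cc_add_one (j : ZMod (2 * S.n)) : cc S (j + 1) = cc S j + 1 := by
  rw [cc_def, cc_def, val_add_one, cast_mod_2n]
  push_cast
  ring

lemma cc_sub_one (j : ZMod (2 * S.n)) : cc S (j - 1) = cc S j - 1 := by
  have h := cc_add_one S (j - 1)
  rw [sub_add_cancel] at h
  rw [h]
  ring

lemma cc_add_nn (j : ZMod (2 * S.n)) : cc S (j + (S.n : ZMod (2 * S.n))) = cc S j := by
  rw [cc_def, cc_def, val_add_nn, cast_mod_2n]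
  push_cast
  simp [ZMod.natCast_self]

lemma lo_add_nn (j : ZMod (2 * S.n)) : lo S (j + (S.n : ZMod (2 * S.n))) ↔ ¬ lo S j := by
  have hv := val_add_nn S j
  have hlt := ZMod.val_lt j
  unfold lo
  constructor
  · intro h1 h2
    rw [hv] at h1
    rw [Nat.mod_eq_of_lt (by omega)] at h1
    omega
  · intro h1
    rw [hv]
    have : (j.val + S.n) % (2 * S.n) = j.val + S.n - 2 * S.n := by
      rw [Nat.mod_eq_sub_mod (by omega), Nat.mod_eq_of_lt (by omega)]
    omega

lemma nn_add_nn : ((S.n : ZMod (2 * S.n)) + (S.n : ZMod (2 * S.n))) = 0 := by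
  have : ((S.n : ℕ) : ZMod (2 * S.n)) + ((S.n : ℕ) : ZMod (2 * S.n))
      = ((2 * S.n : ℕ) : ZMod (2 * S.n)) := by push_cast; ring
  rw [this, ZMod.natCast_self]

lemma val_inj' {j j' : ZMod (2 * S.n)} (h : j.val = j'.val) : j = j' := by
  exact ZMod.val_injective (2 * S.n) h

lemma cc_eq_of (j j' : ZMod (2 * S.n)) (h : cc S j = cc S j') : j.val % S.n = j'.val % S.n := by
  rw [cc_def, cc_def] at h
  exact (ZMod.natCast_eq_natCast_iff _ _ _).mp h

lemma cc_lo_inj {j j' : ZMod (2 * S.n)} (hcc : cc S j = cc S j')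
    (hlo : lo S j ↔ lo S j') : j = j' := by
  have hm := cc_eq_of S j j' hcc
  have h1 := ZMod.val_lt j
  have h2 := ZMod.val_lt j'
  apply val_inj'
  by_cases hl : lo S j
  · have hl' : lo S j' := hlo.mp hl
    unfold lo at hl hl'
    rwa [Nat.mod_eq_of_lt hl, Nat.mod_eq_of_lt hl'] at hm
  · have hl' : ¬ lo S j' := fun h => hl (hlo.mpr h)
    unfold lo at hl hl'
    rw [Nat.mod_eq_sub_mod (by omega), Nat.mod_eq_of_lt (by omega),
      Nat.mod_eq_sub_mod (le_of_not_gt hl'), Nat.mod_eq_of_lt (by omega)] at hm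
    omega


lemma vtx_lo {j : ZMod (2 * S.n)} (h : lo S j) : vtx S j = S.G.src (S.f (cc S j)) := by
  unfold vtx; rw [if_pos h]

lemma vtx_hi {j : ZMod (2 * S.n)} (h : ¬ lo S j) : vtx S j = S.G.src (S.h (cc S j)) := by
  unfold vtx; rw [if_neg h]

lemma bed_lo {j : ZMod (2 * S.n)} (h : lo S j) : bed S j = S.f (cc S j) := by
  unfold bed; rw [if_pos h]

lemma bed_hi {j : ZMod (2 * S.n)} (h : ¬ lo S j) : bed S j = S.h (cc S j) := by
  unfold bed; rw [if_neg h]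

lemma ged_lo {j : ZMod (2 * S.n)} (h : lo S j) : ged S j = S.g (cc S j) := by
  unfold ged; rw [if_pos h]

lemma ged_hi {j : ZMod (2 * S.n)} (h : ¬ lo S j) : ged S j = S.G.rev (S.g (cc S j)) := by
  unfold ged; rw [if_neg h]

lemma kap_lo {j : ZMod (2 * S.n)} (h : lo S j) : kap S j = S.k (cc S j) := by
  unfold kap; rw [if_pos h]

lemma kap_hi {j : ZMod (2 * S.n)} (h : ¬ lo S j) : kap S j = - S.k (cc S j) := by
  unfold kap; rw [if_neg h]

lemma vert_rev (ed : S.G.E) : S.π.Vertical (S.G.rev ed) ↔ S.π.Vertical ed := by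
  unfold GraphFib.Vertical
  rw [S.G.src_rev, S.G.dst_rev]
  exact eq_comm

lemma aG_rev (ed : S.G.E) : S.aG (S.G.rev ed) = - S.aG ed := by
  obtain ⟨_, _, ⟨C, hC⟩⟩ := S.hG
  exact hC.2.2 ed

lemma aG_horiz (ed : S.G.E) (h : ¬ S.π.Vertical ed) : S.aG ed = S.aB (S.π.onE ed) := by
  obtain ⟨_, C, CB, _, _, hcompat⟩ := S.hfib
  exact hcompat.1 ed h

lemma onV_src_f (i : ZMod S.n) : S.π.onV (S.G.src (S.f i)) = S.v i := by
  have h := S.π.src_onE (S.f i) (S.f_horiz i)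
  rw [S.f_over] at h
  rw [← h, S.src_e]

lemma onV_src_h (i : ZMod S.n) : S.π.onV (S.G.src (S.h i)) = S.v i := by
  have h := S.π.src_onE (S.h i) (S.h_horiz i)
  rw [S.h_over] at h
  rw [← h, S.src_e]

lemma onV_vtx (j : ZMod (2 * S.n)) : S.π.onV (vtx S j) = S.v (cc S j) := by
  by_cases h : lo S j
  · rw [vtx_lo S h, onV_src_f]
  · rw [vtx_hi S h, onV_src_h]

lemma src_bed (j : ZMod (2 * S.n)) : S.G.src (bed S j) = vtx S j := by
  by_cases h : lo S j
  · rw [bed_lo S h, vtx_lo S h]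
  · rw [bed_hi S h, vtx_hi S h]

lemma bed_horiz (j : ZMod (2 * S.n)) : ¬ S.π.Vertical (bed S j) := by
  by_cases h : lo S j
  · rw [bed_lo S h]; exact S.f_horiz _
  · rw [bed_hi S h]; exact S.h_horiz _

lemma onE_bed (j : ZMod (2 * S.n)) : S.π.onE (bed S j) = S.e (cc S j) := by
  by_cases h : lo S j
  · rw [bed_lo S h]; exact S.f_over _
  · rw [bed_hi S h]; exact S.h_over _

lemma aG_bed (j : ZMod (2 * S.n)) : S.aG (bed S j) = ga2 S j := by
  rw [aG_horiz S _ (bed_horiz S j), onE_bed]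
  rfl

lemma ged_vert (j : ZMod (2 * S.n)) : S.π.Vertical (ged S j) := by
  by_cases h : lo S j
  · rw [ged_lo S h]; exact S.g_vert _
  · rw [ged_hi S h]; exact (vert_rev S _).mpr (S.g_vert _)

lemma src_ged (j : ZMod (2 * S.n)) : S.G.src (ged S j) = vtx S j := by
  by_cases h : lo S j
  · rw [ged_lo S h, vtx_lo S h, S.g_src]
  · rw [ged_hi S h, vtx_hi S h, S.G.src_rev, S.g_dst]

lemma dst_ged (j : ZMod (2 * S.n)) :
    S.G.dst (ged S j) = vtx S (j + (S.n : ZMod (2 * S.n))) := by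
  have hlo := lo_add_nn S j
  have hcc := cc_add_nn S j
  by_cases h : lo S j
  · have h2 : ¬ lo S (j + (S.n : ZMod (2 * S.n))) := by rw [hlo]; exact not_not_intro h
    rw [ged_lo S h, vtx_hi S h2, hcc, S.g_dst]
  · have h2 : lo S (j + (S.n : ZMod (2 * S.n))) := hlo.mpr h
    rw [ged_hi S h, vtx_lo S h2, hcc, S.G.dst_rev, S.g_src]

lemma cc_ne_zero_of_lo {j : ZMod (2 * S.n)} (hl : lo S j) (hne : j ≠ 0) : cc S j ≠ 0 := by
  rw [cc_def]
  intro h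
  have hd := (ZMod.natCast_eq_zero_iff _ _).mp h
  unfold lo at hl
  have hpos : 0 < j.val := by
    rcases Nat.eq_zero_or_pos j.val with h0 | h0
    · exfalso; apply hne; apply val_inj'; simp [h0]
    · exact h0
  have := Nat.le_of_dvd hpos hd
  omega

lemma dst_bed (j : ZMod (2 * S.n)) : S.G.dst (bed S j) = vtx S (j + 1) := by
  have hvlt := ZMod.val_lt j
  have hn := S.hn
  have hva := val_add_one S j
  have hcc := cc_add_one S j
  by_cases h1 : lo S j <;> by_cases h2 : lo S (j + 1)
  · -- f-chain
    have hne : cc S j + 1 ≠ 0 := by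
      rw [← hcc]
      apply cc_ne_zero_of_lo S h2
      intro h0
      have hz : (j + 1).val = 0 := by rw [h0, ZMod.val_zero]
      rw [hva] at hz
      have h1' : j.val < S.n := h1
      rw [Nat.mod_eq_of_lt (show j.val + 1 < 2 * S.n by omega)] at hz
      omega
    rw [bed_lo S h1, vtx_lo S h2, hcc, S.chain_f (cc S j) hne]
  · -- twist: f (-1) to h 0
    have h1' : j.val < S.n := h1
    have h2' : ¬ (j + 1).val < S.n := h2
    rw [hva, Nat.mod_eq_of_lt (show j.val + 1 < 2 * S.n by omega)] at h2'
    have hval : j.val = S.n - 1 := by omega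
    have hccj : cc S j = -1 := by
      rw [cc_def, hval]
      have h3 : (S.n - 1) + 1 = S.n := by omega
      have hz : ((S.n - 1 : ℕ) : ZMod S.n) + 1 = 0 := by
        rw [show (1 : ZMod S.n) = ((1 : ℕ) : ZMod S.n) by push_cast; rfl]
        rw [← Nat.cast_add, h3, ZMod.natCast_self]
      linear_combination hz
    have hccj1 : cc S (j + 1) = 0 := by rw [hcc, hccj]; ring
    rw [bed_lo S h1, vtx_hi S h2, hccj, hccj1, S.twist_f]
  · -- twist: h (-1) to f 0
    have h1' : ¬ j.val < S.n := h1
    have h2' : (j + 1).val < S.n := h2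
    have hval : j.val = 2 * S.n - 1 := by
      by_contra hv
      rw [hva, Nat.mod_eq_of_lt (show j.val + 1 < 2 * S.n by omega)] at h2'
      omega
    have hccj : cc S j = -1 := by
      rw [cc_def, hval]
      have h3 : (2 * S.n - 1) + 1 = 2 * S.n := by omega
      have hz : ((2 * S.n - 1 : ℕ) : ZMod S.n) + 1 = 0 := by
        rw [show (1 : ZMod S.n) = ((1 : ℕ) : ZMod S.n) by push_cast; rfl]
        rw [← Nat.cast_add, h3]
        push_cast
        simp [ZMod.natCast_self]
      linear_combination hz
    have hccj1 : cc S (j + 1) = 0 := by rw [hcc, hccj]; ring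
    rw [bed_hi S h1, vtx_lo S h2, hccj, hccj1, S.twist_h]

  · -- h-chain
    have h1' : ¬ j.val < S.n := h1
    have h2' : ¬ (j + 1).val < S.n := h2
    have hvlt1 := ZMod.val_lt (j + 1)
    have hj1 : (j + 1).val = j.val + 1 := by
      rcases Nat.lt_or_ge (j.val + 1) (2 * S.n) with hlt | hge
      · rw [hva, Nat.mod_eq_of_lt hlt]
      · exfalso
        have hv : j.val = 2 * S.n - 1 := by omega
        rw [hva, hv, show 2 * S.n - 1 + 1 = 2 * S.n by omega, Nat.mod_self] at h2'
        omega
    have hne : cc S j + 1 ≠ 0 := by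
      rw [← hcc, cc_def, hj1]
      intro hcast
      have hd := (ZMod.natCast_eq_zero_iff _ _).mp hcast
      exact not_dvd_between (show S.n < j.val + 1 by omega) (by omega) hd
    rw [bed_hi S h1, vtx_hi S h2, hcc, S.chain_h (cc S j) hne]
lemma src_rev_bed (j : ZMod (2 * S.n)) :
    S.G.src (S.G.rev (bed S (j - 1))) = vtx S j := by
  rw [S.G.src_rev, dst_bed, sub_add_cancel]

lemma vtx_inj : Function.Injective (vtx S) := by
  intro j j' h
  have hcc : cc S j = cc S j' := S.v_bij.1 (by rw [← onV_vtx, ← onV_vtx, h])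
  by_cases h1 : lo S j <;> by_cases h2 : lo S j'
  · exact cc_lo_inj S hcc (by tauto)
  · exfalso
    rw [vtx_lo S h1, vtx_hi S h2, hcc] at h
    apply S.G.no_loop (S.g (cc S j'))
    rw [S.g_src, S.g_dst, ← h]
  · exfalso
    rw [vtx_hi S h1, vtx_lo S h2, hcc] at h
    apply S.G.no_loop (S.g (cc S j'))
    rw [S.g_src, S.g_dst, h]
  · exact cc_lo_inj S hcc (by tauto)

lemma two_ne_zero_zmodn : (2 : ZMod S.n) ≠ 0 := by
  have hn := S.hn
  rw [show (2 : ZMod S.n) = ((2 : ℕ) : ZMod S.n) by push_cast; rfl]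
  intro h
  have hd := (ZMod.natCast_eq_zero_iff _ _).mp h
  have := Nat.le_of_dvd (by omega) hd
  omega

lemma one_ne_zero_zmodn : (1 : ZMod S.n) ≠ 0 := by
  have hn := S.hn
  rw [show (1 : ZMod S.n) = ((1 : ℕ) : ZMod S.n) by push_cast; rfl]
  intro h
  have hd := (ZMod.natCast_eq_zero_iff _ _).mp h
  have := Nat.le_of_dvd (by omega) hd
  omega

lemma e_inj : Function.Injective S.e := by
  intro i i' h
  apply S.v_bij.1
  rw [← S.src_e, ← S.src_e, h]

lemma bed_ne_ged (j j' : ZMod (2 * S.n)) : bed S j ≠ ged S j' := by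
  intro h
  apply bed_horiz S j
  rw [h]
  exact ged_vert S j'

lemma rev_bed_ne_ged (j j' : ZMod (2 * S.n)) : S.G.rev (bed S j) ≠ ged S j' := by
  intro h
  apply bed_horiz S j
  rw [← vert_rev, h]
  exact ged_vert S j'

lemma onE_rev_bed (j : ZMod (2 * S.n)) :
    S.π.onE (S.G.rev (bed S j)) = S.B.rev (S.e (cc S j)) := by
  rw [S.π.rev_onE (bed S j) (bed_horiz S j), onE_bed]

lemma bed_ne_rev_bed_pred (j : ZMod (2 * S.n)) : bed S j ≠ S.G.rev (bed S (j - 1)) := by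
  intro h
  have h1 : S.e (cc S j) = S.B.rev (S.e (cc S (j - 1))) := by
    rw [← onE_bed, ← onE_rev_bed, h]
  have h2 := congrArg S.B.dst h1
  rw [S.dst_e, S.B.dst_rev, S.src_e, cc_sub_one] at h2
  have h3 : cc S j + 1 = cc S j - 1 := S.v_bij.1 h2
  have : (2 : ZMod S.n) = 0 := by linear_combination h3
  exact two_ne_zero_zmodn S this

lemma edge_cases (j : ZMod (2 * S.n)) (ed : S.G.E) (hsrc : S.G.src ed = vtx S j) :
    ed = bed S j ∨ ed = ged S j ∨ ed = S.G.rev (bed S (j - 1)) := by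
  by_contra hcon
  push_neg at hcon
  obtain ⟨h1, h2, h3⟩ := hcon
  have hcard := S.hG.1 (vtx S j)
  have h4 : (4 : ℕ) ≤ 3 := by
    rw [← hcard]
    exact four_distinct_card
      (⟨bed S j, src_bed S j⟩ : {e : S.G.E // S.G.src e = vtx S j})
      ⟨ged S j, src_ged S j⟩ ⟨S.G.rev (bed S (j - 1)), src_rev_bed S j⟩ ⟨ed, hsrc⟩
      (by simp [Subtype.ext_iff]; exact bed_ne_ged S j j)
      (by simp [Subtype.ext_iff]; exact bed_ne_rev_bed_pred S j)
      (by simp [Subtype.ext_iff]; exact fun h => h1 h.symm)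
      (by simp [Subtype.ext_iff]; exact fun h => (rev_bed_ne_ged S (j-1) j) h.symm)
      (by simp [Subtype.ext_iff]; exact fun h => h2 h.symm)
      (by simp [Subtype.ext_iff]; exact fun h => h3 h.symm)
  omega

lemma vtx_surj : Function.Surjective (vtx S) := by
  intro w
  have hconn := S.hG.2.1 (vtx S 0) w
  induction hconn with
  | refl => exact ⟨0, rfl⟩
  | tail hstep hadj ih =>
    obtain ⟨j, rfl⟩ := ih
    obtain ⟨ed, hs, hd⟩ := hadj
    rcases edge_cases S j ed hs with h | h | h
    · exact ⟨j + 1, by rw [← hd, h, dst_bed]⟩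
    · exact ⟨j + (S.n : ZMod (2 * S.n)), by rw [← hd, h, dst_ged]⟩
    · exact ⟨j - 1, by rw [← hd, h, S.G.dst_rev, src_bed]⟩



lemma val_sub_one_of_pos {j : ZMod (2 * S.n)} (h : j.val ≠ 0) : (j - 1).val = j.val - 1 := by
  have hn := S.hn
  have hvlt := ZMod.val_lt j
  rw [val_sub_one, Nat.mod_eq_sub_mod (by omega), Nat.mod_eq_of_lt (by omega)]
  omega

lemma val_zero_iff {j : ZMod (2 * S.n)} : j.val = 0 ↔ j = 0 := by
  constructor
  · intro h; apply val_inj' S; rw [h, ZMod.val_zero]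
  · intro h; rw [h, ZMod.val_zero]

lemma cc_zero_lo {j : ZMod (2 * S.n)} (hl : lo S j) : cc S j = 0 ↔ j = 0 := by
  constructor
  · intro h
    rw [cc_def] at h
    have hd := (ZMod.natCast_eq_zero_iff _ _).mp h
    have hl' : j.val < S.n := hl
    rcases Nat.eq_zero_or_pos j.val with h0 | h0
    · exact val_zero_iff S |>.mp h0
    · exfalso; have := Nat.le_of_dvd h0 hd; omega
  · intro h; rw [h]; rw [cc_def, ZMod.val_zero]; push_cast; rfl

lemma cc_zero_hi {j : ZMod (2 * S.n)} (hl : ¬ lo S j) : cc S j = 0 ↔ j.val = S.n := by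
  have hl' : ¬ j.val < S.n := hl
  have hvlt := ZMod.val_lt j
  have hn := S.hn
  constructor
  · intro h
    rw [cc_def] at h
    have hd := (ZMod.natCast_eq_zero_iff _ _).mp h
    by_contra hne
    exact not_dvd_between (by omega) (by omega) hd
  · intro h; rw [cc_def, h, ZMod.natCast_self]

lemma kap_ne (j : ZMod (2 * S.n)) : kap S j ≠ 0 := by
  by_cases h : lo S j
  · rw [kap_lo S h]; exact S.k_ne _
  · rw [kap_hi S h]; simp [S.k_ne _]

lemma kap_add_nn (j : ZMod (2 * S.n)) : kap S (j + (S.n : ZMod (2 * S.n))) = - kap S j := by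
  have hlo := lo_add_nn S j
  have hcc := cc_add_nn S j
  by_cases h : lo S j
  · have h2 : ¬ lo S (j + (S.n : ZMod (2 * S.n))) := by rw [hlo]; exact not_not_intro h
    rw [kap_hi S h2, kap_lo S h, hcc]
  · have h2 : lo S (j + (S.n : ZMod (2 * S.n))) := hlo.mpr h
    rw [kap_lo S h2, kap_hi S h, hcc, neg_neg]

lemma ga2_add_nn (j : ZMod (2 * S.n)) : ga2 S (j + (S.n : ZMod (2 * S.n))) = ga2 S j := by
  unfold ga2; rw [cc_add_nn]

lemma ga2_eq (j : ZMod (2 * S.n)) : ga2 S j = S.aB (S.e (cc S j)) := rfl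

lemma ga2_pred (j : ZMod (2 * S.n)) : ga2 S (j - 1) = S.aB (S.e (cc S j - 1)) := by
  rw [ga2_eq, cc_sub_one]

lemma aG_ged (j : ZMod (2 * S.n)) :
    S.aG (ged S j) = kap S j • ga2 S (j - 1) - kap S (j - 1) • ga2 S j := by
  have hfw := S.fiberweight (cc S j)
  by_cases h : lo S j
  · rw [ged_lo S h, hfw, kap_lo S h, ga2_pred, ga2_eq]
    congr 1
    congr 1
    by_cases h0 : j = 0
    · have hcc0 : cc S j = 0 := (cc_zero_lo S h).mpr h0
      rw [if_pos hcc0]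
      have hl1 : ¬ lo S (j - 1) := by
        subst h0
        intro hl
        have hv : ((0 : ZMod (2 * S.n)) - 1).val = 0 + (2 * S.n - 1) := by
          rw [val_sub_one, ZMod.val_zero, Nat.mod_eq_of_lt (by have := S.hn; omega)]
        have hl' : ((0 : ZMod (2 * S.n)) - 1).val < S.n := hl
        have := S.hn
        omega
      rw [kap_hi S hl1, cc_sub_one]
    · have hcc0 : cc S j ≠ 0 := fun hc => h0 ((cc_zero_lo S h).mp hc)
      rw [if_neg hcc0]
      have hl1 : lo S (j - 1) := by
        have hjv : j.val ≠ 0 := fun hv => h0 (val_zero_iff S |>.mp hv)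
        have hsv := val_sub_one_of_pos S hjv
        have h' : j.val < S.n := h
        show (j - 1).val < S.n
        omega
      rw [kap_lo S hl1, cc_sub_one]
  · rw [ged_hi S h, aG_rev, hfw, kap_hi S h, ga2_pred, ga2_eq]
    have hvlt := ZMod.val_lt j
    have hn := S.hn
    have h' : ¬ j.val < S.n := h
    by_cases h0 : cc S j = 0
    · have hv : j.val = S.n := (cc_zero_hi S h).mp h0
      rw [if_pos h0]
      have hl1 : lo S (j - 1) := by
        have hsv := val_sub_one_of_pos S (show j.val ≠ 0 by omega)
        show (j - 1).val < S.n
        omega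
      rw [kap_lo S hl1, cc_sub_one]
      module
    · have hv : j.val ≠ S.n := fun hv => h0 ((cc_zero_hi S h).mpr hv)
      rw [if_neg h0]
      have hl1 : ¬ lo S (j - 1) := by
        have hsv := val_sub_one_of_pos S (show j.val ≠ 0 by omega)
        show ¬ (j - 1).val < S.n
        omega
      rw [kap_hi S hl1, cc_sub_one]
      module

lemma cast_ne_zero_zmod (m a : ℕ) [NeZero m] (h0 : 0 < a) (h1 : a < m) :
    ((a : ℕ) : ZMod m) ≠ 0 := by
  intro h
  have hd := (ZMod.natCast_eq_zero_iff _ _).mp h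
  have := Nat.le_of_dvd h0 hd
  omega

lemma pos_of_pos_mul_pos {a b : ℝ} (ha : 0 < a) (hab : 0 < a * b) : 0 < b := by
  rcases mul_pos_iff.mp hab with ⟨_, h⟩ | ⟨h, _⟩
  · exact h
  · linarith

/-- The turning between consecutive edges of a strictly convex polygon has
constant sign. -/
lemma turn_pos_gen {np : ℕ} [NeZero np] (hnp : 3 ≤ np) (w P : ZMod np → ℂ)
    (t : ZMod np → ℝ) (δ : ℝ)
    (hconv : ∀ i j : ZMod np, j ≠ i → j ≠ i + 1 →
      0 < δ * cross (P (i + 1) - P i) (P j - P i))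
    (ht : ∀ i, 0 < t i) (hs : ∀ i, P (i + 1) - P i = t i • w i) (i : ZMod np) :
    0 < δ * cross (w i) (w (i + 1)) := by
  have h2ne : (i + 2 : ZMod np) ≠ i := by
    intro h
    have : (2 : ZMod np) = 0 := by linear_combination h
    rw [show (2 : ZMod np) = ((2 : ℕ) : ZMod np) by push_cast; rfl] at this
    exact cast_ne_zero_zmod np 2 (by omega) (by omega) this
  have h1ne : (i + 2 : ZMod np) ≠ i + 1 := by
    intro h
    have : (1 : ZMod np) = 0 := by linear_combination h
    rw [show (1 : ZMod np) = ((1 : ℕ) : ZMod np) by push_cast; rfl] at this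
    exact cast_ne_zero_zmod np 1 (by omega) (by omega) this
  have hcv := hconv i (i + 2) h2ne h1ne
  have hsplit : P (i + 2) - P i = (P (i + 1 + 1) - P (i + 1)) + (P (i + 1) - P i) := by
    have : i + 2 = i + 1 + 1 := by ring
    rw [this]; ring
  rw [hsplit, cross_add_right, hs, hs] at hcv
  simp only [cross_smul_left, cross_smul_right, cross_self, mul_zero, add_zero] at hcv
  have hcv2 : 0 < (t i * t (i + 1)) * (δ * cross (w i) (w (i + 1))) := by
    ring_nf at hcv ⊢
    linarith [hcv]
  exact pos_of_pos_mul_pos (mul_pos (ht i) (ht (i + 1))) hcv2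

lemma polygon_delta : ∃ δ : ℝ, (δ = 1 ∨ δ = -1) ∧ ∀ i j : ZMod S.n, j ≠ i → j ≠ i + 1 →
    0 < δ * cross (S.P (i + 1) - S.P i) (S.P j - S.P i) := by
  rcases S.polygon with hp | hp
  · exact ⟨1, Or.inl rfl, fun i j h1 h2 => by rw [one_mul]; exact hp i j h1 h2⟩
  · exact ⟨-1, Or.inr rfl, fun i j h1 h2 => by
      have := hp i j h1 h2; linarith⟩

lemma sigma_spec : ∃ σZ : ℤ, (σZ = 1 ∨ σZ = -1) ∧ ∀ i : ZMod S.n,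
    S.aB (S.e (i - 1)) 0 * S.aB (S.e i) 1 - S.aB (S.e (i - 1)) 1 * S.aB (S.e i) 0 = σZ := by
  obtain ⟨δ, hδ1, hδ⟩ := polygon_delta S
  have hturn : ∀ i : ZMod S.n,
      0 < δ * cross (toC (S.aB (S.e (i - 1)))) (toC (S.aB (S.e i))) := by
    intro i
    have := turn_pos_gen (hn3 S) (fun i => toC (S.aB (S.e i))) S.P S.tl δ hδ S.tl_pos
      S.slope (i - 1)
    rwa [sub_add_cancel] at this
  rcases hδ1 with h1 | h1
  · refine ⟨1, Or.inl rfl, fun i => ?_⟩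
    have ht := hturn i
    rw [h1, one_mul, cross_toC] at ht
    have ht' : (0 : ℤ) < S.aB (S.e (i - 1)) 0 * S.aB (S.e i) 1
        - S.aB (S.e (i - 1)) 1 * S.aB (S.e i) 0 := by exact_mod_cast ht
    rcases S.delzant i with h | h <;> omega
  · refine ⟨-1, Or.inr rfl, fun i => ?_⟩
    have ht := hturn i
    rw [h1, cross_toC] at ht
    have ht' : S.aB (S.e (i - 1)) 0 * S.aB (S.e i) 1
        - S.aB (S.e (i - 1)) 1 * S.aB (S.e i) 0 < (0 : ℤ) := by
      by_contra hc
      push_neg at hc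
      have : (0 : ℝ) ≤ ((S.aB (S.e (i - 1)) 0 * S.aB (S.e i) 1
        - S.aB (S.e (i - 1)) 1 * S.aB (S.e i) 0 : ℤ) : ℝ) := by exact_mod_cast hc
      nlinarith
    rcases S.delzant i with h | h <;> omega

lemma ged_ne_rev_bed (j j' : ZMod (2 * S.n)) : ged S j ≠ S.G.rev (bed S j') := by
  intro h
  exact rev_bed_ne_ged S j' j h.symm

lemma filter_src (j : ZMod (2 * S.n)) :
    Finset.univ.filter (fun ed => S.G.src ed = vtx S j)
      = {bed S j, ged S j, S.G.rev (bed S (j - 1))} := by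
  ext ed
  simp only [Finset.mem_filter, Finset.mem_univ, true_and, Finset.mem_insert,
    Finset.mem_singleton]
  constructor
  · intro h
    exact edge_cases S j ed h
  · rintro (rfl | rfl | rfl)
    · exact src_bed S j
    · exact src_ged S j
    · exact src_rev_bed S j

lemma sum_three (j : ZMod (2 * S.n)) (cf : S.G.E → ℝ) :
    ∑ ed ∈ ({bed S j, ged S j, S.G.rev (bed S (j - 1))} : Finset S.G.E),
        cf ed • toC (S.aG ed)
      = cf (bed S j) • toC (ga2 S j)
        + cf (ged S j) • toC (S.aG (ged S j))
        + cf (S.G.rev (bed S (j - 1))) • (- toC (ga2 S (j - 1))) := by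
  rw [Finset.sum_insert (by
        simp only [Finset.mem_insert, Finset.mem_singleton]
        push_neg
        exact ⟨bed_ne_ged S j j, bed_ne_rev_bed_pred S j⟩),
      Finset.sum_insert (by
        simp only [Finset.mem_singleton]
        exact ged_ne_rev_bed S j (j - 1)),
      Finset.sum_singleton]
  rw [aG_bed, aG_rev, aG_bed, toC_neg, add_assoc]

lemma interior_iff (j : ZMod (2 * S.n)) :
    InteriorVtx S.G S.aG (vtx S j) ↔ (0 < kap S (j - 1) ∧ 0 < kap S j) := by
  have hn := S.hn
  set p := toC (ga2 S (j - 1)) with hp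
  set q := toC (ga2 S j) with hq
  set w := toC (S.aG (ged S j)) with hw
  set a := kap S j with ha
  set b := kap S (j - 1) with hb
  -- the determinant
  have hDz : ga2 S (j - 1) 0 * ga2 S j 1 - ga2 S (j - 1) 1 * ga2 S j 0 = 1 ∨
      ga2 S (j - 1) 0 * ga2 S j 1 - ga2 S (j - 1) 1 * ga2 S j 0 = -1 := by
    rw [ga2_pred, ga2_eq]
    exact S.delzant (cc S j)
  have hDD : cross p q = ((ga2 S (j - 1) 0 * ga2 S j 1 - ga2 S (j - 1) 1 * ga2 S j 0 : ℤ) : ℝ) :=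
    cross_toC _ _
  have hDne : cross p q ≠ 0 := by
    rw [hDD]
    rcases hDz with h | h <;> rw [h] <;> norm_num
  have hDuv : cross q (-p) = cross p q := by
    rw [cross_neg_right, cross_skew p q]
  have hDne' : cross q (-p) ≠ 0 := by rw [hDuv]; exact hDne
  have hwpq : w = (a : ℝ) • p - (b : ℝ) • q := by
    rw [hw, aG_ged, toC_sub, toC_zsmul, toC_zsmul]
  have hcwv : cross w (-p) = (-(b : ℝ)) * cross p q := by
    rw [hwpq, cross_sub_left, cross_smul_left, cross_smul_left, cross_neg_right,
      cross_neg_right, cross_self, cross_skew q p]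
    ring
  have hcuw : cross q w = (-(a : ℝ)) * cross p q := by
    rw [hwpq, cross_sub_right, cross_smul_right, cross_smul_right, cross_self,
      cross_skew q p]
    ring
  have hiff := cone_iff q (-p) w hDne'
  have hs : cross w (-p) / cross q (-p) = -(b : ℝ) := by
    rw [hcwv, hDuv, mul_div_assoc, div_self hDne, mul_one]
  have ht : cross q w / cross q (-p) = -(a : ℝ) := by
    rw [hcuw, hDuv, mul_div_assoc, div_self hDne, mul_one]
  rw [hs, ht] at hiff
  constructor
  · intro hInt
    have hcone : ∀ x : ℂ, ∃ c1 c2 c3 : ℝ, 0 ≤ c1 ∧ 0 ≤ c2 ∧ 0 ≤ c3 ∧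
        x = c1 • q + c2 • (-p) + c3 • w := by
      intro x
      obtain ⟨cf, hcnn, hsum⟩ := hInt x
      rw [filter_src, sum_three] at hsum
      refine ⟨cf (bed S j), cf (S.G.rev (bed S (j - 1))), cf (ged S j),
        hcnn _, hcnn _, hcnn _, ?_⟩
      rw [hsum]
      module
    have := hiff.mp hcone
    constructor
    · have : -(b : ℝ) < 0 := this.1
      have : (0 : ℝ) < (b : ℝ) := by linarith
      exact_mod_cast this
    · have : -(a : ℝ) < 0 := this.2
      have : (0 : ℝ) < (a : ℝ) := by linarith
      exact_mod_cast this
  · intro ⟨hbpos, hapos⟩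
    have hcone := hiff.mpr ⟨by
        have : (0 : ℝ) < (b : ℝ) := by exact_mod_cast hbpos
        linarith,
      by
        have : (0 : ℝ) < (a : ℝ) := by exact_mod_cast hapos
        linarith⟩
    intro x
    obtain ⟨c1, c2, c3, h1, h2, h3, hx⟩ := hcone x
    classical
    refine ⟨fun ed => if ed = bed S j then c1 else if ed = ged S j then c3
      else if ed = S.G.rev (bed S (j - 1)) then c2 else 0, ?_, ?_⟩
    · intro ed
      show 0 ≤ (if ed = bed S j then c1 else if ed = ged S j then c3
        else if ed = S.G.rev (bed S (j - 1)) then c2 else 0)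
      split_ifs <;> first | assumption | exact le_refl 0
    · rw [filter_src, sum_three]
      have n1 := bed_ne_ged S j j
      have n2 := bed_ne_rev_bed_pred S j
      have n3 := ged_ne_rev_bed S j (j - 1)
      simp only [n1, n2, n3, Ne.symm n1, Ne.symm n2, Ne.symm n3, if_true, ite_true,
        ite_false, if_neg, if_false, not_false_iff, eq_self_iff_true]
      show x = c1 • q + c3 • w + c2 • (-p)
      rw [hx]
      module

lemma card_zmod2n : Fintype.card (ZMod (2 * S.n)) = 2 * S.n := ZMod.card _

lemma kap_pos_card :
    (Finset.univ.filter (fun j : ZMod (2 * S.n) => 0 < kap S j)).card = S.n := by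
  classical
  set A := Finset.univ.filter (fun j : ZMod (2 * S.n) => 0 < kap S j) with hA
  set B := Finset.univ.filter (fun j : ZMod (2 * S.n) => kap S j < 0) with hB
  have hcardAB : A.card = B.card := by
    apply Finset.card_bij (fun j _ => j + (S.n : ZMod (2 * S.n)))
    · intro j hj
      rw [hB, Finset.mem_filter]
      rw [hA, Finset.mem_filter] at hj
      refine ⟨Finset.mem_univ _, ?_⟩
      rw [kap_add_nn]
      omega
    · intro j hj j' hj' h
      exact add_right_cancel h
    · intro j hj
      refine ⟨j + (S.n : ZMod (2 * S.n)), ?_, ?_⟩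
      · rw [hA, Finset.mem_filter]
        rw [hB, Finset.mem_filter] at hj
        refine ⟨Finset.mem_univ _, ?_⟩
        rw [kap_add_nn]
        omega
      · rw [add_assoc, nn_add_nn, add_zero]
  have hdisj : Disjoint A B := Finset.disjoint_left.mpr (by
    intro j hj1 hj2
    rw [hA, Finset.mem_filter] at hj1
    rw [hB, Finset.mem_filter] at hj2
    omega)
  have hunion : A ∪ B = Finset.univ := by
    ext j
    simp only [Finset.mem_union, hA, hB, Finset.mem_filter, Finset.mem_univ, true_and,
      iff_true]
    have := kap_ne S j
    omega
  have hcards : A.card + B.card = 2 * S.n := by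
    rw [← Finset.card_union_of_disjoint hdisj, hunion, Finset.card_univ, card_zmod2n]
  omega

lemma interior_filter_card :
    (Finset.univ.filter (fun j : ZMod (2 * S.n) =>
      0 < kap S (j - 1) ∧ 0 < kap S j)).card = S.n - 1 := by
  classical
  have hbij : Function.Bijective (vtx S) := ⟨vtx_inj S, vtx_surj S⟩
  have h1 : Nat.card {j : ZMod (2 * S.n) // InteriorVtx S.G S.aG (vtx S j)} = S.n - 1 := by
    rw [← S.interior_count]
    exact Nat.card_congr (Equiv.subtypeEquiv (Equiv.ofBijective _ hbij) (fun j => Iff.rfl))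
  rw [Nat.card_eq_fintype_card, Fintype.card_subtype] at h1
  rw [← h1]
  apply Finset.card_bij (fun j _ => j)
  · intro j hj
    simp only [Finset.mem_filter, Finset.mem_univ, true_and] at hj ⊢
    exact (interior_iff S j).mpr hj
  · intro j _ j' _ h
    exact h
  · intro j hj
    simp only [Finset.mem_filter, Finset.mem_univ, true_and] at hj ⊢
    exact ⟨j, (interior_iff S j).mp hj, rfl⟩

lemma start_exists : ∃ m : ZMod (2 * S.n), (0 < kap S m ∧ kap S (m - 1) < 0) ∧
    ∀ j : ZMod (2 * S.n), 0 < kap S j ∧ kap S (j - 1) < 0 → j = m := by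
  classical
  set A := Finset.univ.filter (fun j : ZMod (2 * S.n) => 0 < kap S j) with hA
  set I := Finset.univ.filter (fun j : ZMod (2 * S.n) =>
    0 < kap S (j - 1) ∧ 0 < kap S j) with hI
  set St := Finset.univ.filter (fun j : ZMod (2 * S.n) =>
    0 < kap S j ∧ kap S (j - 1) < 0) with hSt
  have hdisj : Disjoint I St := Finset.disjoint_left.mpr (by
    intro j hj1 hj2
    rw [hI, Finset.mem_filter] at hj1
    rw [hSt, Finset.mem_filter] at hj2
    omega)
  have hunion : I ∪ St = A := by
    ext j
    simp only [hI, hSt, hA, Finset.mem_union, Finset.mem_filter, Finset.mem_univ, true_and]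
    have := kap_ne S (j - 1)
    omega
  have hcards : I.card + St.card = S.n := by
    rw [← Finset.card_union_of_disjoint hdisj, hunion, hA]
    exact kap_pos_card S
  have hIcard : I.card = S.n - 1 := interior_filter_card S
  have hStcard : St.card = 1 := by have := S.hn; omega
  obtain ⟨m, hm⟩ := Finset.card_eq_one.mp hStcard
  refine ⟨m, ?_, ?_⟩
  · have : m ∈ St := by rw [hm]; exact Finset.mem_singleton_self m
    rw [hSt, Finset.mem_filter] at this
    exact this.2
  · intro j hj
    have : j ∈ St := by rw [hSt, Finset.mem_filter]; exact ⟨Finset.mem_univ _, hj⟩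
    rw [hm, Finset.mem_singleton] at this
    exact this

lemma arc_pos (m : ZMod (2 * S.n)) (hm0 : 0 < kap S m ∧ kap S (m - 1) < 0)
    (hmu : ∀ j : ZMod (2 * S.n), 0 < kap S j ∧ kap S (j - 1) < 0 → j = m) :
    ∀ d : ℕ, d < S.n → 0 < kap S (m + (d : ZMod (2 * S.n))) := by
  intro d
  induction d using Nat.strong_induction_on with
  | _ d ih =>
    intro hd
    rcases Nat.eq_zero_or_pos d with rfl | hdpos
    · simpa using hm0.1
    rcases lt_trichotomy (kap S (m + (d : ZMod (2 * S.n)))) 0 with hneg | h0 | hpos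
    · exfalso
      set x := m + (d : ZMod (2 * S.n)) + (S.n : ZMod (2 * S.n)) with hx
      have hx1 : 0 < kap S x := by
        rw [hx, kap_add_nn]
        omega
      have hx2 : kap S (x - 1) < 0 := by
        have hxm1 : x - 1 = m + ((d - 1 : ℕ) : ZMod (2 * S.n)) + (S.n : ZMod (2 * S.n)) := by
          rw [hx]
          have hd1 : ((d : ℕ) : ZMod (2 * S.n)) = (((d - 1) + 1 : ℕ) : ZMod (2 * S.n)) := by
            congr 1
            omega
          rw [hd1, Nat.cast_add, Nat.cast_one]
          ring
        rw [hxm1, kap_add_nn]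
        have := ih (d - 1) (by omega) (by omega)
        omega
      have hxm : x = m := hmu x ⟨hx1, hx2⟩
      rw [hx] at hxm
      have hzero : ((d + S.n : ℕ) : ZMod (2 * S.n)) = 0 := by
        push_cast
        linear_combination hxm
      have hdvd := (ZMod.natCast_eq_zero_iff _ _).mp hzero
      have := Nat.le_of_dvd (by omega) hdvd
      omega
    · exact absurd h0 (kap_ne S _)
    · exact hpos

lemma cross_ga2 (σZ : ℤ)
    (hσ : ∀ i : ZMod S.n, S.aB (S.e (i - 1)) 0 * S.aB (S.e i) 1
      - S.aB (S.e (i - 1)) 1 * S.aB (S.e i) 0 = σZ)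
    (x : ZMod (2 * S.n)) :
    cross (toC (ga2 S x)) (toC (ga2 S (x + 1))) = (σZ : ℝ) := by
  rw [ga2_eq, ga2_eq, cc_add_one, cross_toC]
  have h := hσ (cc S x + 1)
  rw [add_sub_cancel_right] at h
  exact_mod_cast h

lemma cross_ga2_pred (σZ : ℤ)
    (hσ : ∀ i : ZMod S.n, S.aB (S.e (i - 1)) 0 * S.aB (S.e i) 1
      - S.aB (S.e (i - 1)) 1 * S.aB (S.e i) 0 = σZ)
    (x : ZMod (2 * S.n)) :
    cross (toC (ga2 S (x - 1))) (toC (ga2 S x)) = (σZ : ℝ) := by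
  have h := cross_ga2 S σZ hσ (x - 1)
  rwa [sub_add_cancel] at h

lemma conv_delta {nn : ℕ} (P : ZMod nn → ℂ) (h : ConvexCyclic P) :
    ∃ δ : ℝ, (δ = 1 ∨ δ = -1) ∧ ∀ i j : ZMod nn, j ≠ i → j ≠ i + 1 →
      0 < δ * cross (P (i + 1) - P i) (P j - P i) := by
  rcases h with hp | hp
  · exact ⟨1, Or.inl rfl, fun i j h1 h2 => by rw [one_mul]; exact hp i j h1 h2⟩
  · exact ⟨-1, Or.inr rfl, fun i j h1 h2 => by
      have := hp i j h1 h2; linarith⟩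

lemma no_three (Sub : Set S.G.E)
    (hcard2 : ∀ v : S.G.V, (∃ ed ∈ Sub, S.G.src ed = v) →
      Nat.card {ed : S.G.E // ed ∈ Sub ∧ S.G.src ed = v} = 2)
    (j₀ : ZMod (2 * S.n)) (h1 : bed S j₀ ∈ Sub)
    (h2 : S.G.rev (bed S (j₀ - 1)) ∈ Sub) (h3 : ged S j₀ ∈ Sub) : False := by
  classical
  have hc := hcard2 (vtx S j₀) ⟨bed S j₀, h1, src_bed S j₀⟩
  haveI : Fintype {ed : S.G.E // ed ∈ Sub ∧ S.G.src ed = vtx S j₀} := Fintype.ofFinite _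
  rw [Nat.card_eq_fintype_card] at hc
  have h3le := three_distinct_card (α := {ed : S.G.E // ed ∈ Sub ∧ S.G.src ed = vtx S j₀})
    ⟨bed S j₀, h1, src_bed S j₀⟩ ⟨ged S j₀, h3, src_ged S j₀⟩
    ⟨S.G.rev (bed S (j₀ - 1)), h2, src_rev_bed S j₀⟩
    (by simp only [ne_eq, Subtype.mk.injEq]; exact bed_ne_ged S j₀ j₀)
    (by simp only [ne_eq, Subtype.mk.injEq]; exact bed_ne_rev_bed_pred S j₀)
    (by simp only [ne_eq, Subtype.mk.injEq]; exact ged_ne_rev_bed S j₀ (j₀ - 1))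
  omega

lemma core {np : ℕ} [NeZero np] (hnp : 3 ≤ np)
    (σZ : ℤ) (hσ1 : σZ = 1 ∨ σZ = -1)
    (hσ : ∀ i : ZMod S.n, S.aB (S.e (i - 1)) 0 * S.aB (S.e i) 1
      - S.aB (S.e (i - 1)) 1 * S.aB (S.e i) 0 = σZ)
    (cyc : ZMod np → S.G.E) (P : ZMod np → ℂ) (t : ZMod np → ℝ)
    (hchain : ∀ i, S.G.dst (cyc i) = S.G.src (cyc (i + 1)))
    (ht : ∀ i, 0 < t i)
    (hslope : ∀ i, P (i + 1) - P i = t i • toC (S.aG (cyc i)))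
    (δ : ℝ) (hδ1 : δ = 1 ∨ δ = -1)
    (hconv : ∀ i j : ZMod np, j ≠ i → j ≠ i + 1 →
      0 < δ * cross (P (i + 1) - P i) (P j - P i))
    (j₀ : ZMod (2 * S.n)) (hk1 : 0 < kap S (j₀ - 1)) (hk2 : 0 < kap S j₀)
    (a : ZMod np) (ha : cyc a = bed S j₀) (ha' : cyc (a - 1) = bed S (j₀ - 1)) :
    False := by
  have hturn : ∀ i : ZMod np,
      0 < δ * cross (toC (S.aG (cyc i))) (toC (S.aG (cyc (i + 1)))) :=
    turn_pos_gen hnp (fun i => toC (S.aG (cyc i))) P t δ hconv ht hslope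
  -- δ equals σ
  have hδσ : δ = (σZ : ℝ) := by
    have h := hturn (a - 1)
    rw [sub_add_cancel, ha, ha', aG_bed, aG_bed, cross_ga2_pred S σZ hσ] at h
    rcases hδ1 with h1 | h1 <;> rcases hσ1 with h2 | h2 <;>
      rw [h1, h2] at h ⊢ <;> (norm_num at h <;> norm_num)
  have hσsq : (σZ : ℝ) * (σZ : ℝ) = 1 := by
    rcases hσ1 with h1 | h1 <;> rw [h1] <;> norm_num
  have hturnσ : ∀ i : ZMod np,
      0 < (σZ : ℝ) * cross (toC (S.aG (cyc i))) (toC (S.aG (cyc (i + 1)))) := by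
    intro i
    rw [← hδσ]
    exact hturn i
  -- forward forcing
  have fwd : ∀ (i : ZMod np) (x : ZMod (2 * S.n)),
      cyc i = bed S x → 0 < kap S x → cyc (i + 1) = bed S (x + 1) := by
    intro i x hcx hkx
    have hsrc : S.G.src (cyc (i + 1)) = vtx S (x + 1) := by
      rw [← hchain, hcx, dst_bed]
    rcases edge_cases S (x + 1) _ hsrc with h | h | h
    · exact h
    · exfalso
      have hT := hturnσ i
      rw [hcx, h, aG_bed, aG_ged, show x + 1 - 1 = x from add_sub_cancel_right x 1,
        toC_sub, toC_zsmul, toC_zsmul, cross_sub_right, cross_smul_right,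
        cross_smul_right, cross_self, cross_ga2 S σZ hσ] at hT
      have hkxR : (0 : ℝ) < (kap S x : ℝ) := by exact_mod_cast hkx
      nlinarith [hT, hσsq, hkxR]
    · exfalso
      rw [show x + 1 - 1 = x from add_sub_cancel_right x 1] at h
      have hT := hturnσ i
      rw [hcx, h, aG_rev, aG_bed, toC_neg, cross_neg_right, cross_self] at hT
      simp at hT
  -- backward forcing
  have bwd : ∀ (i : ZMod np) (x : ZMod (2 * S.n)),
      cyc i = bed S x → 0 < kap S x → cyc (i - 1) = bed S (x - 1) := by
    intro i x hcx hkx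
    have hsrc : S.G.src (S.G.rev (cyc (i - 1))) = vtx S x := by
      rw [S.G.src_rev, hchain (i - 1), sub_add_cancel, hcx, src_bed]
    rcases edge_cases S x _ hsrc with h | h | h
    · exfalso
      have hrev : cyc (i - 1) = S.G.rev (bed S x) := by
        rw [← h, S.G.rev_rev]
      have hT := hturnσ (i - 1)
      rw [sub_add_cancel, hrev, hcx, aG_rev, aG_bed, toC_neg,
        cross_neg_left, cross_self] at hT
      simp at hT
    · exfalso
      have hrev : cyc (i - 1) = S.G.rev (ged S x) := by
        rw [← h, S.G.rev_rev]
      have hT := hturnσ (i - 1)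
      rw [sub_add_cancel, hrev, hcx, aG_rev, aG_ged, aG_bed, toC_neg, toC_sub,
        toC_zsmul, toC_zsmul, cross_neg_left, cross_sub_left, cross_smul_left,
        cross_smul_left, cross_self, cross_ga2_pred S σZ hσ] at hT
      have hkxR : (0 : ℝ) < (kap S x : ℝ) := by exact_mod_cast hkx
      nlinarith [hT, hσsq, hkxR]
    · rw [← S.G.rev_rev (cyc (i - 1)), h, S.G.rev_rev]
  -- the sign pattern
  obtain ⟨m, hm0, hmu⟩ := start_exists S
  have harc := arc_pos S m hm0 hmu
  set d₀ := (j₀ - m).val with hd₀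
  have hj0m : j₀ = m + ((d₀ : ℕ) : ZMod (2 * S.n)) := by
    rw [hd₀, ZMod.natCast_rightInverse (j₀ - m)]
    ring
  have hd₀lt : d₀ < 2 * S.n := ZMod.val_lt _
  have hd₀n : d₀ < S.n := by
    by_contra hge
    push_neg at hge
    have hsplit : ((d₀ : ℕ) : ZMod (2 * S.n))
        = ((d₀ - S.n : ℕ) : ZMod (2 * S.n)) + ((S.n : ℕ) : ZMod (2 * S.n)) := by
      rw [← Nat.cast_add]
      congr 1
      omega
    have hval : kap S j₀ < 0 := by
      rw [hj0m, hsplit, ← add_assoc, kap_add_nn]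
      have := harc (d₀ - S.n) (by omega)
      omega
    omega
  have hd₀pos : 1 ≤ d₀ := by
    by_contra h0
    push_neg at h0
    interval_cases d₀
    · have : j₀ = m := by rw [hj0m]; simp
      rw [this] at hk1
      have := hm0.2
      omega
  -- forward chain
  have Cf : ∀ s : ℕ, d₀ + s ≤ S.n →
      cyc (a + (s : ZMod np)) = bed S (m + ((d₀ + s : ℕ) : ZMod (2 * S.n))) := by
    intro s
    induction s with
    | zero => intro _; simpa using (hj0m ▸ ha)
    | succ s ihs =>
      intro hle
      have hprev := ihs (by omega)
      have hstep := fwd (a + (s : ZMod np)) (m + ((d₀ + s : ℕ) : ZMod (2 * S.n))) hprev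
        (by
          have := harc (d₀ + s) (by omega)
          exact this)
      have hidx : a + ((s + 1 : ℕ) : ZMod np) = a + (s : ZMod np) + 1 := by
        push_cast
        ring
      have hidx2 : m + ((d₀ + (s + 1) : ℕ) : ZMod (2 * S.n))
          = m + ((d₀ + s : ℕ) : ZMod (2 * S.n)) + 1 := by
        push_cast
        ring
      rw [hidx, hidx2]
      exact hstep
  -- backward chain
  have Cb : ∀ s : ℕ, s ≤ d₀ →
      cyc (a - (s : ZMod np)) = bed S (m + ((d₀ - s : ℕ) : ZMod (2 * S.n))) := by
    intro s
    induction s with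
    | zero => intro _; simpa using (hj0m ▸ ha)
    | succ s ihs =>
      intro hle
      have hprev := ihs (by omega)
      have hstep := bwd (a - (s : ZMod np)) (m + ((d₀ - s : ℕ) : ZMod (2 * S.n))) hprev
        (harc (d₀ - s) (by omega))
      have hidx : a - ((s + 1 : ℕ) : ZMod np) = a - (s : ZMod np) - 1 := by
        push_cast
        ring
      have hidx2 : m + ((d₀ - (s + 1) : ℕ) : ZMod (2 * S.n))
          = m + ((d₀ - s : ℕ) : ZMod (2 * S.n)) - 1 := by
        have hc : ((d₀ - s : ℕ) : ZMod (2 * S.n))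
            = ((d₀ - (s + 1) : ℕ) : ZMod (2 * S.n)) + 1 := by
          rw [show (1 : ZMod (2 * S.n)) = ((1 : ℕ) : ZMod (2 * S.n)) by push_cast; rfl,
            ← Nat.cast_add]
          congr 1
          omega
        rw [hc]
        ring
      rw [hidx, hidx2]
      exact hstep
  -- endpoints of the forced chain
  set A := a - ((d₀ : ℕ) : ZMod np) with hAdef
  have hAm : cyc A = bed S m := by
    have := Cb d₀ le_rfl
    rwa [Nat.sub_self, Nat.cast_zero, add_zero] at this
  have hBn : cyc (A + ((S.n : ℕ) : ZMod np)) = bed S (m + ((S.n : ℕ) : ZMod (2 * S.n))) := by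
    have h := Cf (S.n - d₀) (by omega)
    have h1 : (d₀ + (S.n - d₀) : ℕ) = S.n := by omega
    have h2 : a + ((S.n - d₀ : ℕ) : ZMod np) = A + ((S.n : ℕ) : ZMod np) := by
      rw [hAdef, Nat.cast_sub (by omega)]
      ring
    rw [h1] at h
    rw [← h2]
    exact h
  -- case analysis on (n : ZMod np)
  by_cases hN0 : ((S.n : ℕ) : ZMod np) = 0
  · -- bed S m = bed S (m + n) : f = h contradiction
    have hbb : bed S m = bed S (m + ((S.n : ℕ) : ZMod (2 * S.n))) := by
      rw [← hAm, ← hBn, hN0, add_zero]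
    have hlo := lo_add_nn S m
    have hcc := cc_add_nn S m
    by_cases hl : lo S m
    · have hl2 : ¬ lo S (m + ((S.n : ℕ) : ZMod (2 * S.n))) := by
        rw [hlo]; exact not_not_intro hl
      rw [bed_lo S hl, bed_hi S hl2, hcc] at hbb
      exact S.f_ne_h (cc S m) hbb
    · have hl2 : lo S (m + ((S.n : ℕ) : ZMod (2 * S.n))) := hlo.mpr hl
      rw [bed_hi S hl, bed_lo S hl2, hcc] at hbb
      exact S.f_ne_h (cc S m) hbb.symm
  by_cases hN1 : ((S.n : ℕ) : ZMod np) = 1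
  · -- bed S (m+1) = bed S (m + n) : e (cc m + 1) = e (cc m) contradiction
    have hA1 : cyc (A + 1) = bed S (m + 1) := by
      have h := Cb (d₀ - 1) (by omega)
      have h1 : (d₀ - (d₀ - 1) : ℕ) = 1 := by omega
      have h2 : a - ((d₀ - 1 : ℕ) : ZMod np) = A + 1 := by
        rw [hAdef, Nat.cast_sub (by omega)]
        push_cast
        ring
      rw [h1] at h
      rw [← h2]
      simpa using h
    have hbb : bed S (m + 1) = bed S (m + ((S.n : ℕ) : ZMod (2 * S.n))) := by
      rw [← hA1, ← hBn, hN1]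
    have hee : S.e (cc S m + 1) = S.e (cc S m) := by
      have := congrArg S.π.onE hbb
      rw [onE_bed, onE_bed, cc_add_one, cc_add_nn] at this
      exact this
    have := e_inj S hee
    exact one_ne_zero_zmodn S (by linear_combination this)
  by_cases hNm1 : ((S.n : ℕ) : ZMod np) + 1 = 0
  · -- vtx (m + n + 1) = vtx m contradiction
    have hcons := hchain (A + ((S.n : ℕ) : ZMod np))
    have hidx : A + ((S.n : ℕ) : ZMod np) + 1 = A := by
      rw [add_assoc, hNm1, add_zero]
    rw [hidx, hBn, hAm, dst_bed, src_bed] at hcons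
    have := vtx_inj S hcons
    have hzero : ((S.n + 1 : ℕ) : ZMod (2 * S.n)) = 0 := by
      push_cast
      linear_combination this
    have hdvd := (ZMod.natCast_eq_zero_iff _ _).mp hzero
    have hn := S.hn
    have := Nat.le_of_dvd (by omega) hdvd
    omega
  -- the convexity contradiction
  set Bb := A + ((S.n : ℕ) : ZMod np) with hBbdef
  have hne1 : Bb ≠ A := by
    intro h
    apply hN0
    rw [hBbdef] at h
    linear_combination h
  have hne2 : Bb ≠ A + 1 := by
    intro h
    apply hN1
    rw [hBbdef] at h
    linear_combination h
  have hne3 : A ≠ Bb + 1 := by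
    intro h
    apply hNm1
    rw [hBbdef] at h
    linear_combination -h
  have h1 := hconv A Bb hne1 hne2
  have h2 := hconv Bb A (fun h => hne1 h.symm) hne3
  rw [hslope A, hAm, aG_bed] at h1
  rw [hslope Bb, hBn, aG_bed, ga2_add_nn] at h2
  rw [cross_smul_left] at h1 h2
  rw [show P A - P Bb = -(P Bb - P A) by ring, cross_neg_right] at h2
  rcases hδ1 with hd | hd <;> rw [hd] at h1 h2
  · rw [one_mul] at h1 h2
    have hp1 := pos_of_pos_mul_pos (ht A) h1
    have hp2 := pos_of_pos_mul_pos (ht Bb) h2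
    linarith
  · have h1' : 0 < t A * (- cross (toC (ga2 S m)) (P Bb - P A)) := by nlinarith [h1]
    have h2' : 0 < t Bb * (cross (toC (ga2 S m)) (P Bb - P A)) := by nlinarith [h2]
    have hp1 := pos_of_pos_mul_pos (ht A) h1'
    have hp2 := pos_of_pos_mul_pos (ht Bb) h2'
    linarith

end S7
/-- in the Section 7 setting, the signed graph `Γ` fails the Kähler
extension criterion: the two basic edges emanating from any interior vertex are not
both contained in any 2-valent signed GKM subgraph of polytope type. -/
theorem statement8 (S : Section7) :
    (∃ p : S.G.V, InteriorVtx S.G S.aG p) ∧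
    ∀ p : S.G.V, InteriorVtx S.G S.aG p →
      ∀ e e' : S.G.E, S.G.src e = p → S.G.src e' = p → e ≠ e' →
        ¬ S.π.Vertical e → ¬ S.π.Vertical e' →
        ¬ ∃ Sub : Set S.G.E, IsPolytopeTypeSub S.G S.aG Sub ∧ e ∈ Sub ∧ e' ∈ Sub := by
  constructor
  · -- there is an interior vertex
    have hc := S.interior_count
    have hne : Nat.card {p : S.G.V // InteriorVtx S.G S.aG p} ≠ 0 := by
      rw [hc]; have := S.hn; omega
    obtain ⟨⟨p, hp⟩⟩ := (Nat.card_ne_zero.mp hne).1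
    exact ⟨p, hp⟩
  · rintro p hp e e' hsrc hsrc' hnee hv hv' ⟨Sub, hPoly, heS, heS'⟩
    obtain ⟨j₀, rfl⟩ := vtx_surj S p
    obtain ⟨hk1, hk2⟩ := (interior_iff S j₀).mp hp
    -- identify e and e' with the two basic edges at the vertex
    have he1 : e = bed S j₀ ∨ e = S.G.rev (bed S (j₀ - 1)) := by
      rcases edge_cases S j₀ e hsrc with h | h | h
      · exact Or.inl h
      · exact absurd (h ▸ ged_vert S j₀) hv
      · exact Or.inr h
    have he'1 : e' = bed S j₀ ∨ e' = S.G.rev (bed S (j₀ - 1)) := by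
      rcases edge_cases S j₀ e' hsrc' with h | h | h
      · exact Or.inl h
      · exact absurd (h ▸ ged_vert S j₀) hv'
      · exact Or.inr h
    have hboth : bed S j₀ ∈ Sub ∧ S.G.rev (bed S (j₀ - 1)) ∈ Sub := by
      rcases he1 with h1 | h1 <;> rcases he'1 with h2 | h2
      · exact absurd (h1.trans h2.symm) hnee
      · exact ⟨h1 ▸ heS, h2 ▸ heS'⟩
      · exact ⟨h2 ▸ heS', h1 ▸ heS⟩
      · exact absurd (h1.trans h2.symm) hnee
    obtain ⟨hbedS, hrevS⟩ := hboth
    obtain ⟨⟨hSne, hSrev, hScard2, hSconn, hTconn⟩,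
      np, hnp3, cyc, P, t, hcycS, hcover, hchain, hconvC, htpos, hslope⟩ := hPoly
    haveI : NeZero np := ⟨by omega⟩
    obtain ⟨σZ, hσ1, hσ⟩ := sigma_spec S
    obtain ⟨δ, hδ1, hδ⟩ := conv_delta P hconvC
    have hturn : ∀ i : ZMod np,
        0 < δ * cross (toC (S.aG (cyc i))) (toC (S.aG (cyc (i + 1)))) :=
      turn_pos_gen hnp3 (fun i => toC (S.aG (cyc i))) P t δ hδ htpos hslope
    -- locate the basic edge `bed j₀` on the cycle
    obtain ⟨i0, hi0⟩ := hcover (bed S j₀) hbedS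
    rcases hi0 with hfwd | hbwd
    · -- forward traversal
      have hsrc2 : S.G.src (S.G.rev (cyc (i0 - 1))) = vtx S j₀ := by
        rw [S.G.src_rev, hchain (i0 - 1), sub_add_cancel, ← hfwd, src_bed]
      rcases edge_cases S j₀ _ hsrc2 with hA | hB | hC
      · -- backtracking is impossible
        have hrev : cyc (i0 - 1) = S.G.rev (bed S j₀) := by
          rw [← hA, S.G.rev_rev]
        have hT := hturn (i0 - 1)
        rw [sub_add_cancel, hrev, ← hfwd, aG_rev, aG_bed, toC_neg,
          cross_neg_left, cross_self] at hT
        simp at hT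
      · -- the fiber edge cannot be in the subgraph
        have hgedS : ged S j₀ ∈ Sub := by
          rw [← hB]
          exact hSrev _ (hcycS (i0 - 1))
        exact no_three S Sub hScard2 j₀ hbedS hrevS hgedS
      · -- forced chain: apply the core lemma directly
        have hprev : cyc (i0 - 1) = bed S (j₀ - 1) := by
          rw [← S.G.rev_rev (cyc (i0 - 1)), hC, S.G.rev_rev]
        exact core S hnp3 σZ hσ1 hσ cyc P t hchain htpos hslope δ hδ1 hδ
          j₀ hk1 hk2 i0 hfwd.symm hprev
    · -- backward traversal: reverse the cycle
      have hi0' : cyc i0 = S.G.rev (bed S j₀) := by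
        rw [← S.G.rev_rev (cyc i0), ← hbwd]
      have hsrc2 : S.G.src (cyc (i0 + 1)) = vtx S j₀ := by
        rw [← hchain, hi0', S.G.dst_rev, src_bed]
      rcases edge_cases S j₀ _ hsrc2 with hA | hB | hC
      · -- backtracking is impossible
        have hT := hturn i0
        rw [hi0', hA, aG_rev, aG_bed, toC_neg, cross_neg_left, cross_self] at hT
        simp at hT
      · -- the fiber edge cannot be in the subgraph
        have hgedS : ged S j₀ ∈ Sub := by
          rw [← hB]
          exact hcycS (i0 + 1)
        exact no_three S Sub hScard2 j₀ hbedS hrevS hgedS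
      · -- reverse the cycle and apply the core lemma
        set cyc' : ZMod np → S.G.E := fun i => S.G.rev (cyc (-1 - i)) with hcyc'
        set P' : ZMod np → ℂ := fun i => P (-i) with hP'
        set t' : ZMod np → ℝ := fun i => t (-1 - i) with ht'
        have hchain' : ∀ i, S.G.dst (cyc' i) = S.G.src (cyc' (i + 1)) := by
          intro i
          show S.G.dst (S.G.rev (cyc (-1 - i))) = S.G.src (S.G.rev (cyc (-1 - (i + 1))))
          rw [S.G.dst_rev, S.G.src_rev, hchain (-1 - (i + 1)),
            show (-1 - (i + 1) + 1 : ZMod np) = -1 - i by ring]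
        have htpos' : ∀ i, 0 < t' i := fun i => htpos _
        have hslope' : ∀ i, P' (i + 1) - P' i = t' i • toC (S.aG (cyc' i)) := by
          intro i
          show P (-(i + 1)) - P (-i) = t (-1 - i) • toC (S.aG (S.G.rev (cyc (-1 - i))))
          have h := hslope (-1 - i)
          rw [show (-1 - i + 1 : ZMod np) = -i by ring] at h
          rw [aG_rev, toC_neg, smul_neg, show (-(i + 1) : ZMod np) = -1 - i by ring]
          rw [Complex.real_smul] at h ⊢
          linear_combination -h
        have hδ' : ∀ i j : ZMod np, j ≠ i → j ≠ i + 1 →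
            0 < (-δ) * cross (P' (i + 1) - P' i) (P' j - P' i) := by
          intro i j hji hji1
          have h := hδ (-1 - i) (-j)
            (fun hc => hji1 (by linear_combination -hc))
            (fun hc => hji (by linear_combination -hc))
          rw [show (-1 - i + 1 : ZMod np) = -i by ring] at h
          show 0 < (-δ) * cross (P (-(i + 1)) - P (-i)) (P (-j) - P (-i))
          have hcr : cross (P (-(i + 1)) - P (-i)) (P (-j) - P (-i))
              = - cross (P (-i) - P (-1 - i)) (P (-j) - P (-1 - i)) := by
            rw [show (-(i + 1) : ZMod np) = -1 - i by ring,
              show P (-1 - i) - P (-i) = -(P (-i) - P (-1 - i)) by ring,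
              cross_neg_left,
              show P (-j) - P (-i) = (P (-j) - P (-1 - i)) - (P (-i) - P (-1 - i)) by ring,
              cross_sub_right, cross_self]
            ring
          rw [hcr]
          have hrw : (-δ) * - cross (P (-i) - P (-1 - i)) (P (-j) - P (-1 - i))
              = δ * cross (P (-i) - P (-1 - i)) (P (-j) - P (-1 - i)) := by ring
          rw [hrw]
          exact h
        have hδ1' : (-δ) = 1 ∨ (-δ) = -1 := by
          rcases hδ1 with h | h <;> rw [h]
          · exact Or.inr (by norm_num)
          · exact Or.inl (by norm_num)
        have ha'' : cyc' (-i0 - 1) = bed S j₀ := by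
          show S.G.rev (cyc (-1 - (-i0 - 1))) = bed S j₀
          rw [show (-1 - (-i0 - 1) : ZMod np) = i0 by ring, hi0', S.G.rev_rev]
        have ha''' : cyc' (-i0 - 1 - 1) = bed S (j₀ - 1) := by
          show S.G.rev (cyc (-1 - (-i0 - 1 - 1))) = bed S (j₀ - 1)
          rw [show (-1 - (-i0 - 1 - 1) : ZMod np) = i0 + 1 by ring, hC, S.G.rev_rev]
        exact core S hnp3 σZ hσ1 hσ cyc' P' t' hchain' htpos' hslope' (-δ) hδ1' hδ'
          j₀ hk1 hk2 (-i0 - 1) ha'' ha'''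

end GKMPaper
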